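/- arXiv:2008.03891 — 4 statements merged into one kernel-verified Lean document; each statement's English description precedes it below -/
import Mathlib

section
/- (Hoeffding's inequality for bounded i.i.d. samples) Let X₁,…,X_m be i.i.d. random variables with a ≤ X_i ≤ b almost surely and mean μ. Then for any ε > 0, P( (1/m)Σ X_i − μ ≥ ε ) ≤ exp(−2mε²/(b−a)²). -/
open Real

lemma hoeff_calc {p : ℝ} (hp0 : 0 ≤ p) (hp1 : p ≤ 1) (h : ℝ) :
    (1 - p) * exp (-p * h) + p * exp ((1 - p) * h) ≤ exp (h ^ 2 / 8) := by
  set D : ℝ → ℝ := fun x => 1 - p + p * exp x with hD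
  have hDpos : ∀ x, 0 < D x := by
    intro x
    rcases lt_or_eq_of_le hp1 with h1 | h1
    · have : 0 < 1 - p := by linarith
      have : 0 ≤ p * exp x := mul_nonneg hp0 (exp_pos x).le
      simp only [hD]; linarith
    · simp only [hD]; rw [h1]; simpa using exp_pos x
  set g : ℝ → ℝ := fun x => x ^ 2 / 8 + p * x - Real.log (D x) with hg
  set g' : ℝ → ℝ := fun x => x / 4 + p - p * exp x / D x with hg'
  have hDderiv : ∀ x, HasDerivAt D (p * exp x) x := by
    intro x
    exact ((Real.hasDerivAt_exp x).const_mul p).const_add (1 - p)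
  have hgderiv : ∀ x, HasDerivAt g (g' x) x := by
    intro x
    have hlog : HasDerivAt (fun y => Real.log (D y)) (p * exp x / D x) x :=
      (hDderiv x).log (hDpos x).ne'
    have h1 : HasDerivAt (fun y : ℝ => y ^ 2 / 8 + p * y) (x / 4 + p) x := by
      have := ((hasDerivAt_pow 2 x).div_const 8).add ((hasDerivAt_id x).const_mul p)
      exact this.congr_deriv (by ring)
    exact h1.sub hlog
  have hg'deriv : ∀ x, HasDerivAt g' (1 / 4 - p * (1 - p) * exp x / (D x) ^ 2) x := by
    intro x
    have hq : HasDerivAt (fun y => p * exp y / D y)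
        ((p * exp x * D x - p * exp x * (p * exp x)) / (D x) ^ 2) x :=
      ((Real.hasDerivAt_exp x).const_mul p).div (hDderiv x) (hDpos x).ne'
    have h1 : HasDerivAt (fun y : ℝ => y / 4 + p) (1 / 4) x := by
      simpa using ((hasDerivAt_id x).div_const 4).add_const p
    have := h1.sub hq
    refine this.congr_deriv ?_
    have : p * exp x * D x - p * exp x * (p * exp x) = p * (1 - p) * exp x := by
      simp only [hD]; ring
    rw [this]
  have hg''nonneg : ∀ x, 0 ≤ 1 / 4 - p * (1 - p) * exp x / (D x) ^ 2 := by
    intro x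
    have hsq : 0 < (D x) ^ 2 := pow_pos (hDpos x) 2
    rw [sub_nonneg, div_le_iff₀ hsq]
    have key : (1 - p) * (p * exp x) ≤ ((1 - p) + p * exp x) ^ 2 / 4 := by
      nlinarith [sq_nonneg ((1 - p) - p * exp x)]
    have : D x = (1 - p) + p * exp x := by simp [hD]
    rw [this]; nlinarith [sq_nonneg ((1 - p) - p * exp x)]
  have hg'mono : Monotone g' := by
    have hdiff : Differentiable ℝ g' := fun x => (hg'deriv x).differentiableAt
    refine monotone_of_deriv_nonneg hdiff ?_
    intro x
    rw [(hg'deriv x).deriv]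
    exact hg''nonneg x
  have hg'0 : g' 0 = 0 := by simp [hg', hD]
  have hgdiff : Differentiable ℝ g := fun x => (hgderiv x).differentiableAt
  have hg0 : g 0 = 0 := by simp [hg, hD]
  have hgnonneg : ∀ x, 0 ≤ g x := by
    intro x
    rcases le_total 0 x with hx | hx
    · have hmono : MonotoneOn g (Set.Ici 0) := by
        refine monotoneOn_of_deriv_nonneg (convex_Ici 0) hgdiff.continuous.continuousOn
          hgdiff.differentiableOn ?_
        intro y hy
        rw [(hgderiv y).deriv]
        have : (0:ℝ) ≤ y := le_of_lt (by simpa using hy)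
        calc (0:ℝ) = g' 0 := hg'0.symm
          _ ≤ g' y := hg'mono this
      have := hmono (Set.self_mem_Ici) (Set.mem_Ici.2 hx) hx
      rwa [hg0] at this
    · have hanti : AntitoneOn g (Set.Iic 0) := by
        refine antitoneOn_of_deriv_nonpos (convex_Iic 0) hgdiff.continuous.continuousOn
          hgdiff.differentiableOn ?_
        intro y hy
        rw [(hgderiv y).deriv]
        have : y ≤ (0:ℝ) := le_of_lt (by simpa using hy)
        calc g' y ≤ g' 0 := hg'mono this
          _ = 0 := hg'0
      have := hanti (Set.mem_Iic.2 hx) (Set.self_mem_Iic) hx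
      rwa [hg0] at this
  -- conclude
  have hgh := hgnonneg h
  have hlog_le : Real.log (D h) ≤ h ^ 2 / 8 + p * h := by
    simp only [hg] at hgh; linarith
  have hD_le : D h ≤ exp (h ^ 2 / 8 + p * h) := by
    rw [← Real.exp_log (hDpos h)]
    exact exp_le_exp.2 hlog_le
  have key : exp (-p * h) * D h ≤ exp (h ^ 2 / 8) := by
    calc exp (-p * h) * D h ≤ exp (-p * h) * exp (h ^ 2 / 8 + p * h) := by
          exact mul_le_mul_of_nonneg_left hD_le (exp_pos _).le
      _ = exp (h ^ 2 / 8) := by rw [← exp_add]; ring_nf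
  calc (1 - p) * exp (-p * h) + p * exp ((1 - p) * h)
      = exp (-p * h) * D h := by
        simp only [hD]
        rw [show (1 - p) * h = -p * h + h by ring, exp_add]
        ring
    _ ≤ exp (h ^ 2 / 8) := key
open MeasureTheory ProbabilityTheory Real

lemma hoeff_mgf {Ω : Type*} [MeasurableSpace Ω] (P : Measure Ω) [IsProbabilityMeasure P]
    (Y : Ω → ℝ) (hY : Measurable Y) (a b : ℝ) (hab : a < b)
    (hb : ∀ᵐ ω ∂P, Y ω ∈ Set.Icc a b) (hmean : ∫ ω, Y ω ∂P = 0) (t : ℝ) :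
    mgf Y P t ≤ exp (t ^ 2 * (b - a) ^ 2 / 8) := by
  have hba : (0:ℝ) < b - a := by linarith
  -- integrability of Y
  have hYint : Integrable Y P := by
    refine Integrable.mono' (integrable_const (max |a| |b|)) hY.aestronglyMeasurable ?_
    filter_upwards [hb] with ω ⟨h1, h2⟩
    rw [Real.norm_eq_abs, abs_le]
    constructor
    · calc -(max |a| |b|) ≤ -|a| := by simp
        _ ≤ a := neg_abs_le a
        _ ≤ Y ω := h1
    · calc Y ω ≤ b := h2
        _ ≤ |b| := le_abs_self b
        _ ≤ max |a| |b| := le_max_right _ _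
  -- a ≤ 0 ≤ b
  have ha0 : a ≤ 0 := by
    have : ∫ _ω, a ∂P ≤ ∫ ω, Y ω ∂P :=
      integral_mono_ae (integrable_const a) hYint (by filter_upwards [hb] with ω h; exact h.1)
    simpa [hmean] using this
  have hb0 : 0 ≤ b := by
    have : ∫ ω, Y ω ∂P ≤ ∫ _ω, b ∂P :=
      integral_mono_ae hYint (integrable_const b) (by filter_upwards [hb] with ω h; exact h.2)
    simpa [hmean] using this
  -- pointwise convexity bound: exp (t*y) ≤ C0 + C1*y for y ∈ [a,b]
  set C0 : ℝ := (b * exp (t * a) - a * exp (t * b)) / (b - a) with hC0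
  set C1 : ℝ := (exp (t * b) - exp (t * a)) / (b - a) with hC1
  have hpw : ∀ y ∈ Set.Icc a b, exp (t * y) ≤ C0 + C1 * y := by
    rintro y ⟨h1, h2⟩
    have hl1 : (0:ℝ) ≤ (b - y) / (b - a) := div_nonneg (by linarith) hba.le
    have hl2 : (0:ℝ) ≤ (y - a) / (b - a) := div_nonneg (by linarith) hba.le
    have hsum : (b - y) / (b - a) + (y - a) / (b - a) = 1 := by field_simp; ring
    have hconv := convexOn_exp.2 (Set.mem_univ (t * a)) (Set.mem_univ (t * b)) hl1 hl2 hsum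
    have hpt : (b - y) / (b - a) * (t * a) + (y - a) / (b - a) * (t * b) = t * y := by
      field_simp; ring
    simp only [smul_eq_mul] at hconv
    rw [hpt] at hconv
    calc exp (t * y) ≤ (b - y) / (b - a) * exp (t * a) + (y - a) / (b - a) * exp (t * b) :=
          hconv
      _ = C0 + C1 * y := by rw [hC0, hC1]; field_simp; ring
  -- integrate
  have hexp_int : Integrable (fun ω => exp (t * Y ω)) P := by
    refine Integrable.mono' (integrable_const (exp (|t| * max |a| |b|)))
      ((hY.const_mul t).exp.aestronglyMeasurable) ?_
    filter_upwards [hb] with ω ⟨h1, h2⟩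
    rw [Real.norm_eq_abs, abs_of_nonneg (exp_pos _).le, exp_le_exp]
    calc t * Y ω ≤ |t * Y ω| := le_abs_self _
      _ = |t| * |Y ω| := abs_mul _ _
      _ ≤ |t| * max |a| |b| := by
          refine mul_le_mul_of_nonneg_left ?_ (abs_nonneg t)
          rw [abs_le]
          constructor
          · calc -(max |a| |b|) ≤ -|a| := by simp
              _ ≤ a := neg_abs_le a
              _ ≤ Y ω := h1
          · exact h2.trans ((le_abs_self b).trans (le_max_right _ _))
  have hint_le : mgf Y P t ≤ C0 := by
    have h1 : mgf Y P t ≤ ∫ ω, (C0 + C1 * Y ω) ∂P := by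
      refine integral_mono_ae hexp_int ((integrable_const C0).add (hYint.const_mul C1)) ?_
      filter_upwards [hb] with ω hω
      exact hpw (Y ω) hω
    have h2 : ∫ ω, (C0 + C1 * Y ω) ∂P = C0 := by
      rw [integral_add (integrable_const C0) (hYint.const_mul C1), integral_const,
        integral_const_mul, hmean]
      simp
    rwa [h2] at h1
  -- apply calculus lemma with p = -a/(b-a), h = t*(b-a)
  set p : ℝ := -a / (b - a) with hp
  have hp0 : 0 ≤ p := div_nonneg (by linarith) hba.le
  have hp1 : p ≤ 1 := by rw [hp, div_le_one hba]; linarith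
  have hcalc := hoeff_calc hp0 hp1 (t * (b - a))
  have hC0eq : C0 = (1 - p) * exp (-p * (t * (b - a))) + p * exp ((1 - p) * (t * (b - a))) := by
    have e1 : -p * (t * (b - a)) = t * a := by rw [hp]; field_simp
    have e2 : (1 - p) * (t * (b - a)) = t * b := by rw [hp]; field_simp; ring
    have h1p : 1 - p = b / (b - a) := by rw [hp]; field_simp; ring
    rw [e1, e2, h1p, hp, hC0, div_mul_eq_mul_div, div_mul_eq_mul_div, ← add_div]
    congr 1
    ring
  have hfin : C0 ≤ exp (t ^ 2 * (b - a) ^ 2 / 8) := by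
    rw [hC0eq]
    convert hcalc using 2
    ring
  exact hint_le.trans hfin
lemma bdd_integrable {Ω : Type*} [MeasurableSpace Ω] {P : Measure Ω} [IsProbabilityMeasure P]
    {Y : Ω → ℝ} (hY : Measurable Y) {a b : ℝ} (hb : ∀ᵐ ω ∂P, Y ω ∈ Set.Icc a b) :
    Integrable Y P := by
  refine Integrable.mono' (integrable_const (max |a| |b|)) hY.aestronglyMeasurable ?_
  filter_upwards [hb] with ω ⟨h1, h2⟩
  rw [Real.norm_eq_abs, abs_le]
  exact ⟨le_trans (by calc -(max |a| |b|) ≤ -|a| := by simp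
      _ ≤ a := neg_abs_le a) h1,
    h2.trans ((le_abs_self b).trans (le_max_right _ _))⟩

lemma bdd_exp_integrable {Ω : Type*} [MeasurableSpace Ω] {P : Measure Ω} [IsProbabilityMeasure P]
    {Y : Ω → ℝ} (hY : Measurable Y) {a b : ℝ} (hb : ∀ᵐ ω ∂P, Y ω ∈ Set.Icc a b) (t : ℝ) :
    Integrable (fun ω => exp (t * Y ω)) P := by
  refine Integrable.mono' (integrable_const (exp (|t| * max |a| |b|)))
    ((hY.const_mul t).exp.aestronglyMeasurable) ?_
  filter_upwards [hb] with ω ⟨h1, h2⟩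
  rw [Real.norm_eq_abs, abs_of_nonneg (exp_pos _).le, exp_le_exp]
  calc t * Y ω ≤ |t * Y ω| := le_abs_self _
    _ = |t| * |Y ω| := abs_mul _ _
    _ ≤ |t| * max |a| |b| := by
        refine mul_le_mul_of_nonneg_left ?_ (abs_nonneg t)
        rw [abs_le]
        exact ⟨le_trans (by calc -(max |a| |b|) ≤ -|a| := by simp
      _ ≤ a := neg_abs_le a) h1,
          h2.trans ((le_abs_self b).trans (le_max_right _ _))⟩

/-- Hoeffding's inequality for bounded i.i.d. samples: if `X₁, …, X_m` are
i.i.d., bounded in `[a,b]` almost surely, with common mean `μ`, then for any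
`ε > 0`, `P((1/m) Σ Xᵢ - μ ≥ ε) ≤ exp (-2 m ε² / (b-a)²)`. -/
theorem hoeffding_inequality_iid
    {Ω : Type*} [MeasureSpace Ω] [IsProbabilityMeasure (volume : Measure Ω)]
    (m : ℕ) (hm : 1 ≤ m) (X : Fin m → Ω → ℝ) (hmeas : ∀ i, Measurable (X i))
    (hindep : iIndepFun X (volume : Measure Ω))
    (hident : ∀ i j, Measure.map (X i) (volume : Measure Ω)
        = Measure.map (X j) (volume : Measure Ω))
    (a b μ : ℝ) (hab : a < b)
    (hbound : ∀ i, ∀ᵐ ω ∂(volume : Measure Ω), X i ω ∈ Set.Icc a b)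
    (hmean : ∀ i, ∫ ω, X i ω ∂(volume : Measure Ω) = μ)
    (ε : ℝ) (hε : 0 < ε) :
    ((volume : Measure Ω) {ω | ε ≤ (∑ i, X i ω) / m - μ}).toReal
      ≤ Real.exp (-2 * m * ε ^ 2 / (b - a) ^ 2) := by
  set P : Measure Ω := volume with hP
  have hba : (0:ℝ) < b - a := by linarith
  have hm0 : (0:ℝ) < m := by exact_mod_cast hm
  set Y : Fin m → Ω → ℝ := fun i ω => X i ω - μ with hY
  have hYmeas : ∀ i, Measurable (Y i) := fun i => (hmeas i).sub measurable_const
  have hYindep : iIndepFun Y P :=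
    hindep.comp (fun _ x => x - μ) (fun _ => measurable_id.sub measurable_const)
  have hYbound : ∀ i, ∀ᵐ ω ∂P, Y i ω ∈ Set.Icc (a - μ) (b - μ) := by
    intro i
    filter_upwards [hbound i] with ω ⟨h1, h2⟩
    exact ⟨by simp [hY]; linarith, by simp [hY]; linarith⟩
  have hYmean : ∀ i, ∫ ω, Y i ω ∂P = 0 := by
    intro i
    simp only [hY]
    rw [integral_sub (bdd_integrable (hmeas i) (hbound i)) (integrable_const μ),
      hmean i, integral_const]
    simp
  set t : ℝ := 4 * ε / (b - a) ^ 2 with ht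
  have ht0 : 0 ≤ t := by positivity
  have hYexpint : ∀ i, Integrable (fun ω => exp (t * Y i ω)) P := fun i =>
    bdd_exp_integrable (hYmeas i) (hYbound i) t
  -- the event rewrite
  have hset : {ω | ε ≤ (∑ i, X i ω) / m - μ} = {ω | (m:ℝ) * ε ≤ (∑ i, Y i) ω} := by
    ext ω
    simp only [Set.mem_setOf_eq, Finset.sum_apply]
    have hsum : ∑ i, Y i ω = (∑ i, X i ω) - m * μ := by
      simp only [hY]
      rw [Finset.sum_sub_distrib, Finset.sum_const, Finset.card_univ, Fintype.card_fin,
        nsmul_eq_mul]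
    rw [hsum, le_sub_iff_add_le, le_sub_iff_add_le, le_div_iff₀ hm0]
    constructor <;> intro h <;> nlinarith
  -- Chernoff
  have hchern := measure_ge_le_exp_mul_mgf (μ := P) (X := ∑ i, Y i) ((m:ℝ) * ε) ht0
    (hYindep.integrable_exp_mul_sum hYmeas (fun i _ => hYexpint i))
  -- mgf bound
  have hmgf : mgf (∑ i, Y i) P t ≤ exp (t ^ 2 * (b - a) ^ 2 / 8) ^ m := by
    rw [hYindep.mgf_sum hYmeas]
    calc ∏ i, mgf (Y i) P t ≤ ∏ _i : Fin m, exp (t ^ 2 * (b - a) ^ 2 / 8) := by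
          refine Finset.prod_le_prod (fun i _ => mgf_nonneg) (fun i _ => ?_)
          have := hoeff_mgf P (Y i) (hYmeas i) (a - μ) (b - μ) (by linarith)
            (hYbound i) (hYmean i) t
          simpa using this
      _ = exp (t ^ 2 * (b - a) ^ 2 / 8) ^ m := by
          rw [Finset.prod_const, Finset.card_univ, Fintype.card_fin]
  calc ((volume : Measure Ω) {ω | ε ≤ (∑ i, X i ω) / m - μ}).toReal
      = (P {ω | (m:ℝ) * ε ≤ (∑ i, Y i) ω}).toReal := by rw [hset]
    _ ≤ exp (-t * ((m:ℝ) * ε)) * mgf (∑ i, Y i) P t := hchern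
    _ ≤ exp (-t * ((m:ℝ) * ε)) * exp (t ^ 2 * (b - a) ^ 2 / 8) ^ m :=
        mul_le_mul_of_nonneg_left hmgf (exp_pos _).le
    _ = exp (-t * ((m:ℝ) * ε) + m * (t ^ 2 * (b - a) ^ 2 / 8)) := by
        rw [← Real.exp_nat_mul, ← Real.exp_add]
    _ = Real.exp (-2 * m * ε ^ 2 / (b - a) ^ 2) := by
        congr 1
        rw [ht]
        field_simp
        ring
end

section
/- (Correctness of range trimming for the lower bound) Let D be a finite set of distinct reals, S a uniform random m-subset (m ≥ 2), and suppose Lbound is a procedure such that for every finite population P of reals and every sample size k, the probability over uniform k-subsets T of P that Lbound(T) > AVG(P) is less than δ. Then the probability that Lbound(S \ {max S}) > AVG(D) is less than δ, where Lbound is applied treating S \ {max S} as a sample from {d ∈ D : d < max S}. -/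
open scoped Classical

lemma count_by_max (D : Finset ℝ) (m : ℕ) (hm : 1 ≤ m) (q : Finset ℝ → Prop) :
    ((D.powersetCard m).filter (fun S => ∃ x ∈ S, (∀ y ∈ S, y ≤ x) ∧ q (S.erase x))).card
      = ∑ x ∈ D, (((D.filter (· < x)).powersetCard (m-1)).filter q).card := by
  have hset : (D.powersetCard m).filter
        (fun S => ∃ x ∈ S, (∀ y ∈ S, y ≤ x) ∧ q (S.erase x))
      = D.biUnion (fun x => (D.powersetCard m).filter
        (fun S => x ∈ S ∧ (∀ y ∈ S, y ≤ x) ∧ q (S.erase x))) := by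
    ext S
    simp only [Finset.mem_filter, Finset.mem_biUnion, Finset.mem_powersetCard]
    constructor
    · rintro ⟨⟨hSD, hcard⟩, x, hxS, hmax, hq⟩
      exact ⟨x, hSD hxS, ⟨hSD, hcard⟩, hxS, hmax, hq⟩
    · rintro ⟨x, _, hS, hxS, hmax, hq⟩
      exact ⟨hS, x, hxS, hmax, hq⟩
  rw [hset, Finset.card_biUnion]
  · apply Finset.sum_congr rfl
    intro x hxD
    apply Finset.card_bij (fun S _ => S.erase x)
    · intro S hS
      simp only [Finset.mem_filter, Finset.mem_powersetCard] at hS ⊢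
      obtain ⟨⟨hSD, hcard⟩, hxS, hmax, hq⟩ := hS
      refine ⟨⟨fun y hy => ?_, ?_⟩, hq⟩
      · rw [Finset.mem_erase] at hy
        exact Finset.mem_filter.2 ⟨hSD hy.2, lt_of_le_of_ne (hmax y hy.2) hy.1⟩
      · rw [Finset.card_erase_of_mem hxS, hcard]
    · intro S hS S' hS' h
      simp only [Finset.mem_filter] at hS hS'
      have := Finset.insert_erase hS.2.1
      have := Finset.insert_erase hS'.2.1
      rw [← Finset.insert_erase hS.2.1, ← Finset.insert_erase hS'.2.1, h]
    · intro T hT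
      simp only [Finset.mem_filter, Finset.mem_powersetCard] at hT
      obtain ⟨⟨hTP, hcard⟩, hq⟩ := hT
      have hxT : x ∉ T := fun hx => lt_irrefl x (Finset.mem_filter.1 (hTP hx)).2
      refine ⟨insert x T, ?_, ?_⟩
      · simp only [Finset.mem_filter, Finset.mem_powersetCard]
        refine ⟨⟨?_, ?_⟩, Finset.mem_insert_self x T, ?_, ?_⟩
        · intro y hy
          rcases Finset.mem_insert.1 hy with rfl | hyT
          · exact hxD
          · exact (Finset.mem_filter.1 (hTP hyT)).1
        · rw [Finset.card_insert_of_notMem hxT, hcard, Nat.sub_add_cancel hm]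
        · intro y hy
          rcases Finset.mem_insert.1 hy with rfl | hyT
          · exact le_refl y
          · exact le_of_lt (Finset.mem_filter.1 (hTP hyT)).2
        · rw [Finset.erase_insert hxT]; exact hq
      · rw [Finset.erase_insert hxT]
  · intro x hx y hy hxy
    apply Finset.disjoint_left.2
    intro S hSx hSy
    simp only [Finset.mem_filter] at hSx hSy
    exact hxy (le_antisymm (hSy.2.2.1 x hSx.2.1) (hSx.2.2.1 y hSy.2.1))

lemma avg_filter_lt_le (D : Finset ℝ) (x : ℝ)
    (hne : (D.filter (· < x)).Nonempty) (hDne : D.Nonempty) :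
    (D.filter (· < x)).sum id / ((D.filter (· < x)).card : ℝ)
      ≤ D.sum id / (D.card : ℝ) := by
  set P := D.filter (· < x) with hP
  set Q := D.filter (fun y => ¬ y < x) with hQ
  have hsum : D.sum id = P.sum id + Q.sum id := (Finset.sum_filter_add_sum_filter_not D _ id).symm
  have hcard : D.card = P.card + Q.card := (Finset.card_filter_add_card_filter_not _).symm
  have hPQ : P.sum id * (Q.card : ℝ) ≤ Q.sum id * (P.card : ℝ) := by
    have key : ∀ a ∈ P, a * (Q.card : ℝ) ≤ Q.sum id := by
      intro a ha
      have ha' : a < x := (Finset.mem_filter.1 ha).2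
      calc a * (Q.card : ℝ) = ∑ b ∈ Q, a := by rw [Finset.sum_const, nsmul_eq_mul, mul_comm]
        _ ≤ ∑ b ∈ Q, b := by
            apply Finset.sum_le_sum
            intro b hb
            exact le_of_lt (lt_of_lt_of_le ha' (not_lt.1 (Finset.mem_filter.1 hb).2))
        _ = Q.sum id := rfl
    calc P.sum id * (Q.card : ℝ) = ∑ a ∈ P, a * (Q.card : ℝ) := by rw [← Finset.sum_mul]; rfl
      _ ≤ ∑ a ∈ P, Q.sum id := Finset.sum_le_sum key
      _ = Q.sum id * (P.card : ℝ) := by rw [Finset.sum_const, nsmul_eq_mul, mul_comm]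
  have hPpos : (0:ℝ) < P.card := by exact_mod_cast Finset.card_pos.2 hne
  have hDpos : (0:ℝ) < D.card := by exact_mod_cast Finset.card_pos.2 hDne
  rw [div_le_div_iff₀ hPpos hDpos]
  rw [hsum, hcard]
  push_cast
  nlinarith [hPQ]

/-- Correctness of range trimming for the lower bound: if `Lbound` is a
procedure which, for every finite population `P` of reals and sample size `k`,
fails (returns a value exceeding `AVG(P)`) on fewer than a `δ` fraction of the
uniform `k`-subsets of `P`, then applying `Lbound` to `S \ {max S}` (treated
as a sample from `{d ∈ D : d < max S}`) for a uniformly random `m`-subset `S`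
of `D` exceeds `AVG(D)` with probability less than `δ`. -/
theorem range_trim_lower_bound_correct
    (Lbound : Finset ℝ → ℝ) (δ : ℝ) (hδ : 0 < δ)
    (hguarantee : ∀ (P : Finset ℝ) (k : ℕ), P.Nonempty → k ≤ P.card →
      (((P.powersetCard k).filter
            (fun T => P.sum id / (P.card : ℝ) < Lbound T)).card : ℝ)
        < δ * ((P.powersetCard k).card : ℝ))
    (D : Finset ℝ) (m : ℕ) (hm : 2 ≤ m) (hmD : m ≤ D.card) :
    (((D.powersetCard m).filter
          (fun S => ∃ x ∈ S, (∀ y ∈ S, y ≤ x) ∧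
            D.sum id / (D.card : ℝ) < Lbound (S.erase x))).card : ℝ)
      < δ * ((D.powersetCard m).card : ℝ) := by
  have hm1 : 1 ≤ m := le_trans (by norm_num) hm
  have hDne : D.Nonempty := Finset.card_pos.1 (lt_of_lt_of_le (by omega) hmD)
  -- rewrite LHS count
  rw [count_by_max D m hm1 (fun T => D.sum id / (D.card : ℝ) < Lbound T)]
  -- rewrite RHS count
  have htot : (D.powersetCard m).card
      = ∑ x ∈ D, ((D.filter (· < x)).powersetCard (m-1)).card := by
    have := count_by_max D m hm1 (fun _ => True)
    simp only [Finset.filter_true] at this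
    rw [← this]
    congr 1
    ext S
    simp only [Finset.mem_filter]
    constructor
    · intro hS
      refine ⟨hS, ?_⟩
      have hScard : S.card = m := (Finset.mem_powersetCard.1 hS).2
      have hSne : S.Nonempty := Finset.card_pos.1 (by omega)
      obtain ⟨x, hxS, hmax⟩ := S.exists_max_image id hSne
      exact ⟨x, hxS, hmax, trivial⟩
    · exact fun h => h.1
  rw [htot]
  push_cast
  rw [Finset.mul_sum]
  -- termwise comparison
  apply Finset.sum_lt_sum
  · intro x hxD
    by_cases hne : ((D.filter (· < x)).powersetCard (m-1)).Nonempty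
    · obtain ⟨T, hT⟩ := hne
      have hT' := Finset.mem_powersetCard.1 hT
      have hPne : (D.filter (· < x)).Nonempty := by
        rcases Finset.eq_empty_or_nonempty (D.filter (· < x)) with h | h
        · rw [h] at hT'
          have hTe : T = ∅ := Finset.subset_empty.1 hT'.1
          subst hTe
          simp at hT'
          omega
        · exact h
      have hk : m - 1 ≤ (D.filter (· < x)).card :=
        hT'.2 ▸ Finset.card_le_card hT'.1
      have hg := hguarantee (D.filter (· < x)) (m-1) hPne hk
      have havg := avg_filter_lt_le D x hPne hDne
      have hsub : (((D.filter (· < x)).powersetCard (m-1)).filter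
            (fun T => D.sum id / (D.card : ℝ) < Lbound T))
          ⊆ (((D.filter (· < x)).powersetCard (m-1)).filter
            (fun T => (D.filter (· < x)).sum id / (((D.filter (· < x)).card : ℝ)) < Lbound T)) := by
        apply Finset.monotone_filter_right
        intro T _ hT2
        exact lt_of_le_of_lt havg hT2
      have hle : ((((D.filter (· < x)).powersetCard (m-1)).filter
            (fun T => D.sum id / (D.card : ℝ) < Lbound T)).card : ℝ)
          ≤ ((((D.filter (· < x)).powersetCard (m-1)).filter
            (fun T => (D.filter (· < x)).sum id / (((D.filter (· < x)).card : ℝ)) < Lbound T)).card : ℝ) := by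
        exact_mod_cast Finset.card_le_card hsub
      exact le_of_lt (lt_of_le_of_lt hle hg)
    · rw [Finset.not_nonempty_iff_eq_empty] at hne
      rw [hne]
      simp
  · -- strict at x₀ = max of D
    refine ⟨D.max' hDne, D.max'_mem hDne, ?_⟩
    set x₀ := D.max' hDne with hx₀
    have hPeq : D.filter (· < x₀) = D.erase x₀ := by
      ext y
      simp only [Finset.mem_filter, Finset.mem_erase]
      constructor
      · rintro ⟨hyD, hylt⟩
        exact ⟨ne_of_lt hylt, hyD⟩
      · rintro ⟨hne', hyD⟩
        exact ⟨hyD, lt_of_le_of_ne (D.le_max' y hyD) hne'⟩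
    have hPcard : (D.filter (· < x₀)).card = D.card - 1 := by
      rw [hPeq, Finset.card_erase_of_mem (D.max'_mem hDne)]
    have hPne : (D.filter (· < x₀)).Nonempty := by
      rw [← Finset.card_pos, hPcard]; omega
    have hk : m - 1 ≤ (D.filter (· < x₀)).card := by rw [hPcard]; omega
    have hg := hguarantee (D.filter (· < x₀)) (m-1) hPne hk
    have havg := avg_filter_lt_le D x₀ hPne hDne
    have hsub : (((D.filter (· < x₀)).powersetCard (m-1)).filter
          (fun T => D.sum id / (D.card : ℝ) < Lbound T))
        ⊆ (((D.filter (· < x₀)).powersetCard (m-1)).filter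
          (fun T => (D.filter (· < x₀)).sum id / (((D.filter (· < x₀)).card : ℝ)) < Lbound T)) := by
      apply Finset.monotone_filter_right
      intro T _ hT2
      exact lt_of_le_of_lt havg hT2
    have hle : ((((D.filter (· < x₀)).powersetCard (m-1)).filter
          (fun T => D.sum id / (D.card : ℝ) < Lbound T)).card : ℝ)
        ≤ ((((D.filter (· < x₀)).powersetCard (m-1)).filter
          (fun T => (D.filter (· < x₀)).sum id / (((D.filter (· < x₀)).card : ℝ)) < Lbound T)).card : ℝ) := by
      exact_mod_cast Finset.card_le_card hsub
    exact lt_of_le_of_lt hle hg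
end

section
/- (Serfling's martingale property) Let D = {x₁,…,x_N} with mean μ, and X₁,…,X_N a uniformly random without-replacement ordering of D. Define Z_k = (Σ_{t=1}^k (X_t − μ))/(N − k) for 0 ≤ k ≤ N−1. Then (Z_k) is a martingale with respect to the natural filtration of (X_t). -/
open MeasureTheory

/-- The space of orderings (permutations) of the population, with the discrete
σ-algebra. -/
instance permMeasurableSpace (N : ℕ) : MeasurableSpace (Equiv.Perm (Fin N)) := ⊤

instance permMeasurableSingletonClass (N : ℕ) :
    MeasurableSingletonClass (Equiv.Perm (Fin N)) :=
  ⟨fun _ => MeasurableSpace.measurableSet_top⟩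

lemma count_aux (N a b : ℕ) (hb : b ≤ N) :
    (Finset.univ.filter (fun t : Fin N => a ≤ (t : ℕ) ∧ (t : ℕ) < b)).card = b - a := by
  have h1 : ((Finset.range N).filter (fun n => a ≤ n ∧ n < b)) = Finset.Ico a b := by
    ext n; simp [Finset.mem_Ico]; omega
  have h2 : (Finset.range N) = Finset.univ.map (Fin.valEmbedding (n := N)) := by
    rw [Fin.map_valEmbedding_univ]; ext n; simp
  calc (Finset.univ.filter (fun t : Fin N => a ≤ (t : ℕ) ∧ (t : ℕ) < b)).card
      = ((Finset.univ.filter (fun t : Fin N => a ≤ (t : ℕ) ∧ (t : ℕ) < b)).map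
          Fin.valEmbedding).card := (Finset.card_map _).symm
    _ = ((Finset.range N).filter (fun n => a ≤ n ∧ n < b)).card := by
        rw [h2, Finset.filter_map]; rfl
    _ = b - a := by rw [h1, Nat.card_Ico]

lemma count_aux2 (N a : ℕ) :
    (Finset.univ.filter (fun t : Fin N => a ≤ (t : ℕ))).card = N - a := by
  have := count_aux N a N le_rfl
  simpa [Fin.is_lt] using this

/-- permutations fixing all indices below `i` -/
noncomputable def Hset {N : ℕ} (i : Fin N) : Finset (Equiv.Perm (Fin N)) :=
  Finset.univ.filter (fun τ : Equiv.Perm (Fin N) => ∀ t : Fin N, (t : ℕ) < (i : ℕ) → τ t = t)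

lemma mem_Hset {N : ℕ} (i : Fin N) {τ : Equiv.Perm (Fin N)} :
    τ ∈ Hset i ↔ ∀ t : Fin N, (t : ℕ) < (i : ℕ) → τ t = t := by simp [Hset]

lemma Hset_maps {N : ℕ} (i : Fin N) {τ : Equiv.Perm (Fin N)} (hτ : τ ∈ Hset i) {t : Fin N}
    (ht : (i : ℕ) ≤ (t : ℕ)) : (i : ℕ) ≤ ((τ t : Fin N) : ℕ) := by
  by_contra h
  push_neg at h
  have h2 : τ (τ t) = τ t := (mem_Hset i).1 hτ _ h
  have := τ.injective h2
  omega

lemma Hset_fiber_card {N : ℕ} (i : Fin N) {t : Fin N} (ht : (i : ℕ) ≤ (t : ℕ)) {b : Fin N}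
    (hb : (i : ℕ) ≤ (b : ℕ)) :
    ((Hset i).filter (fun τ => τ t = b)).card
      = ((Hset i).filter (fun τ => τ t = i)).card := by
  apply Finset.card_bij' (fun τ _ => (Equiv.swap b i) * τ) (fun τ _ => (Equiv.swap b i) * τ)
  · intro τ hτ
    simp only [Finset.mem_filter] at hτ ⊢
    refine ⟨(mem_Hset i).2 fun s hs => ?_, ?_⟩
    · have h1 : τ s = s := (mem_Hset i).1 hτ.1 s hs
      simp only [Equiv.Perm.mul_apply, h1]
      exact Equiv.swap_apply_of_ne_of_ne (fun h => by subst h; omega) (fun h => by subst h; omega)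
    · simp [Equiv.Perm.mul_apply, hτ.2]
  · intro τ hτ
    simp only [Finset.mem_filter] at hτ ⊢
    refine ⟨(mem_Hset i).2 fun s hs => ?_, ?_⟩
    · have h1 : τ s = s := (mem_Hset i).1 hτ.1 s hs
      simp only [Equiv.Perm.mul_apply, h1]
      exact Equiv.swap_apply_of_ne_of_ne (fun h => by subst h; omega) (fun h => by subst h; omega)
    · simp [Equiv.Perm.mul_apply, hτ.2, Equiv.swap_apply_right]
  · intro τ _; simp [← mul_assoc]
  · intro τ _; simp [← mul_assoc]

lemma Hset_sum {N : ℕ} (i : Fin N) (g : Fin N → ℝ) {t : Fin N} (ht : (i : ℕ) ≤ (t : ℕ)) :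
    ((N - (i : ℕ) : ℕ) : ℝ) * ∑ τ ∈ Hset i, g (τ t)
      = ((Hset i).card : ℝ)
          * ∑ b ∈ Finset.univ.filter (fun b : Fin N => (i : ℕ) ≤ (b : ℕ)), g b := by
  set c := ((Hset i).filter (fun τ => τ t = i)).card with hc
  have key : ∑ τ ∈ Hset i, g (τ t)
      = ∑ b ∈ Finset.univ.filter (fun b : Fin N => (i : ℕ) ≤ (b : ℕ)), (c : ℝ) * g b := by
    rw [← Finset.sum_fiberwise_of_maps_to (g := fun τ : Equiv.Perm (Fin N) => τ t)
      (fun τ _ => Finset.mem_univ _) (fun τ => g (τ t))]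
    rw [← Finset.sum_filter_add_sum_filter_not Finset.univ
      (fun b : Fin N => (i : ℕ) ≤ (b : ℕ))]
    have h2 : ∀ b ∈ Finset.univ.filter (fun b : Fin N => ¬ (i : ℕ) ≤ (b : ℕ)),
        ∑ τ ∈ (Hset i).filter (fun τ => τ t = b), g (τ t) = 0 := by
      intro b hb
      simp only [Finset.mem_filter] at hb
      have : (Hset i).filter (fun τ => τ t = b) = ∅ := by
        refine Finset.filter_eq_empty_iff.2 fun τ hτ h => ?_
        have := Hset_maps i hτ ht
        rw [h] at this; omega
      simp [this]
    rw [Finset.sum_congr rfl h2, Finset.sum_const, smul_zero, add_zero]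
    refine Finset.sum_congr rfl fun b hb => ?_
    simp only [Finset.mem_filter] at hb
    have : ∑ τ ∈ (Hset i).filter (fun τ => τ t = b), g (τ t)
        = ∑ τ ∈ (Hset i).filter (fun τ => τ t = b), g b := by
      refine Finset.sum_congr rfl fun τ hτ => ?_
      simp only [Finset.mem_filter] at hτ
      rw [hτ.2]
    rw [this, Finset.sum_const, Hset_fiber_card i ht hb.2, ← hc, nsmul_eq_mul]
  have hcard : (Hset i).card = (N - (i : ℕ)) * c := by
    rw [Finset.card_eq_sum_card_fiberwise
      (f := fun τ : Equiv.Perm (Fin N) => τ t) (t := Finset.univ) (fun τ _ => Finset.mem_univ _)]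
    rw [← Finset.sum_filter_add_sum_filter_not Finset.univ
      (fun b : Fin N => (i : ℕ) ≤ (b : ℕ))]
    have h2 : ∀ b ∈ Finset.univ.filter (fun b : Fin N => ¬ (i : ℕ) ≤ (b : ℕ)),
        ((Hset i).filter (fun τ => τ t = b)).card = 0 := by
      intro b hb
      simp only [Finset.mem_filter] at hb
      refine Finset.card_eq_zero.2 (Finset.filter_eq_empty_iff.2 fun τ hτ h => ?_)
      have := Hset_maps i hτ ht
      rw [h] at this; omega
    rw [Finset.sum_congr rfl h2, Finset.sum_const, smul_zero, add_zero]
    rw [Finset.sum_congr rfl (fun b hb => Hset_fiber_card i ht (Finset.mem_filter.1 hb).2)]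
    rw [Finset.sum_const, count_aux2, smul_eq_mul]
  rw [key, Finset.mul_sum, hcard]
  push_cast
  rw [Finset.mul_sum]
  exact Finset.sum_congr rfl fun b _ => by ring

lemma sum_fiber_reparam {N : ℕ} (i : Fin N) (σ₀ : Equiv.Perm (Fin N))
    (F : Equiv.Perm (Fin N) → ℝ) :
    ∑ σ ∈ Finset.univ.filter
        (fun σ : Equiv.Perm (Fin N) => ∀ t : Fin N, (t : ℕ) < (i : ℕ) → σ t = σ₀ t), F σ
      = ∑ τ ∈ Hset i, F (σ₀ * τ) := by
  refine Finset.sum_bij' (fun σ _ => σ₀⁻¹ * σ) (fun τ _ => σ₀ * τ) ?_ ?_ ?_ ?_ ?_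
  · intro σ hσ
    simp only [Finset.mem_filter, Finset.mem_univ, true_and] at hσ
    refine (mem_Hset i).2 fun t ht => ?_
    simp [Equiv.Perm.mul_apply, hσ t ht]
  · intro τ hτ
    simp only [Finset.mem_filter, Finset.mem_univ, true_and]
    intro t ht
    simp [Equiv.Perm.mul_apply, (mem_Hset i).1 hτ t ht]
  · intro σ _; simp [← mul_assoc]
  · intro τ _; simp [← mul_assoc]
  · intro σ _; simp [← mul_assoc]

lemma fiber_eq {N : ℕ} (x : Fin N → ℝ) (μ : ℝ) (hsum : ∑ a, x a = N * μ) (i j : Fin N)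
    (hij : i ≤ j) (σ₀ : Equiv.Perm (Fin N)) :
    ∑ σ ∈ Finset.univ.filter
        (fun σ : Equiv.Perm (Fin N) => ∀ t : Fin N, (t : ℕ) < (i : ℕ) → σ t = σ₀ t),
      (∑ t : Fin N, if (t : ℕ) < (j : ℕ) then x (σ t) - μ else 0) / ((N : ℝ) - (j : ℕ))
    = ∑ σ ∈ Finset.univ.filter
        (fun σ : Equiv.Perm (Fin N) => ∀ t : Fin N, (t : ℕ) < (i : ℕ) → σ t = σ₀ t),
      (∑ t : Fin N, if (t : ℕ) < (i : ℕ) then x (σ t) - μ else 0) / ((N : ℝ) - (i : ℕ)) := by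
  have hij' : (i : ℕ) ≤ (j : ℕ) := hij
  rw [sum_fiber_reparam, sum_fiber_reparam]
  set S : ℝ := ∑ t : Fin N, if (t : ℕ) < (i : ℕ) then x (σ₀ t) - μ else 0 with hS
  have hR : ∀ τ ∈ Hset i,
      (∑ t : Fin N, if (t : ℕ) < (i : ℕ) then x ((σ₀ * τ) t) - μ else 0) / ((N : ℝ) - (i : ℕ))
        = S / ((N : ℝ) - (i : ℕ)) := by
    intro τ hτ
    congr 1
    refine Finset.sum_congr rfl fun t _ => ?_
    split_ifs with h
    · rw [Equiv.Perm.mul_apply, (mem_Hset i).1 hτ t h]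
    · rfl
  have hL : ∀ τ ∈ Hset i,
      (∑ t : Fin N, if (t : ℕ) < (j : ℕ) then x ((σ₀ * τ) t) - μ else 0)
        = S + ∑ t : Fin N, if ((i : ℕ) ≤ (t : ℕ) ∧ (t : ℕ) < (j : ℕ))
            then x (σ₀ (τ t)) - μ else 0 := by
    intro τ hτ
    rw [hS, ← Finset.sum_add_distrib]
    refine Finset.sum_congr rfl fun t _ => ?_
    rcases lt_or_ge (t : ℕ) (i : ℕ) with h | h
    · rw [if_pos (lt_of_lt_of_le h hij'), if_pos h, if_neg (by omega),
        Equiv.Perm.mul_apply, (mem_Hset i).1 hτ t h, add_zero]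
    · rcases lt_or_ge (t : ℕ) (j : ℕ) with h2 | h2
      · rw [if_pos h2, if_neg (by omega), if_pos ⟨h, h2⟩, zero_add, Equiv.Perm.mul_apply]
      · rw [if_neg (by omega), if_neg (by omega), if_neg (by omega), add_zero]
  have hNi : ((N : ℝ) - (i : ℕ)) ≠ 0 := by
    have := i.isLt
    have : ((i : ℕ) : ℝ) < (N : ℝ) := by exact_mod_cast this
    linarith
  have hNj : ((N : ℝ) - (j : ℕ)) ≠ 0 := by
    have := j.isLt
    have : ((j : ℕ) : ℝ) < (N : ℝ) := by exact_mod_cast this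
    linarith
  have hT : (∑ b ∈ Finset.univ.filter (fun b : Fin N => (i : ℕ) ≤ (b : ℕ)),
      (x (σ₀ b) - μ)) = -S := by
    have htot : ∑ b : Fin N, (x (σ₀ b) - μ) = 0 := by
      rw [Equiv.sum_comp σ₀ (fun b => x b - μ), Finset.sum_sub_distrib, hsum]
      simp [mul_comm]
    have hsplit := Finset.sum_filter_add_sum_filter_not Finset.univ
      (fun b : Fin N => (b : ℕ) < (i : ℕ)) (fun b => x (σ₀ b) - μ)
    have hfe : Finset.univ.filter (fun b : Fin N => ¬ (b : ℕ) < (i : ℕ))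
        = Finset.univ.filter (fun b : Fin N => (i : ℕ) ≤ (b : ℕ)) := by
      refine Finset.filter_congr fun b _ => ?_; simp [not_lt]
    have hSf : S = ∑ b ∈ Finset.univ.filter (fun b : Fin N => (b : ℕ) < (i : ℕ)),
        (x (σ₀ b) - μ) := (Finset.sum_filter _ _).symm
    rw [hfe] at hsplit
    rw [hSf]
    linarith [hsplit, htot]
  have hNi' : (((N - (i : ℕ) : ℕ)) : ℝ) = (N : ℝ) - (i : ℕ) := by
    have := le_of_lt i.isLt; push_cast [this]; ring
  have hinner : ∀ t : Fin N, (i : ℕ) ≤ (t : ℕ) →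
      ∑ τ ∈ Hset i, (x (σ₀ (τ t)) - μ)
        = ((Hset i).card : ℝ) * (-S) / ((N : ℝ) - (i : ℕ)) := by
    intro t ht
    have := Hset_sum i (fun b => x (σ₀ b) - μ) ht
    rw [hT, hNi'] at this
    field_simp at this ⊢
    linarith [this]
  rw [Finset.sum_congr rfl hR, Finset.sum_const, nsmul_eq_mul]
  have hLHS : ∑ τ ∈ Hset i,
      (∑ t : Fin N, if (t : ℕ) < (j : ℕ) then x ((σ₀ * τ) t) - μ else 0) / ((N : ℝ) - (j : ℕ))
      = (((Hset i).card : ℝ) * S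
          + ((j : ℕ) - (i : ℕ) : ℕ) * (((Hset i).card : ℝ) * (-S) / ((N : ℝ) - (i : ℕ))))
          / ((N : ℝ) - (j : ℕ)) := by
    rw [Finset.sum_congr rfl (fun τ hτ => by rw [hL τ hτ])]
    rw [← Finset.sum_div]
    congr 1
    rw [Finset.sum_add_distrib, Finset.sum_const, nsmul_eq_mul]
    congr 1
    rw [Finset.sum_comm]
    have : ∀ t : Fin N,
        ∑ τ ∈ Hset i, (if ((i : ℕ) ≤ (t : ℕ) ∧ (t : ℕ) < (j : ℕ))
            then x (σ₀ (τ t)) - μ else 0)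
          = if ((i : ℕ) ≤ (t : ℕ) ∧ (t : ℕ) < (j : ℕ))
              then ((Hset i).card : ℝ) * (-S) / ((N : ℝ) - (i : ℕ)) else 0 := by
      intro t
      split_ifs with h
      · rw [← hinner t h.1]
      · exact Finset.sum_const_zero
    rw [Finset.sum_congr rfl (fun t _ => this t), ← Finset.sum_filter, Finset.sum_const,
      count_aux N (i : ℕ) (j : ℕ) (le_of_lt j.isLt), nsmul_eq_mul]
  rw [hLHS]
  have hji : (((j : ℕ) - (i : ℕ) : ℕ) : ℝ) = ((j : ℕ) : ℝ) - ((i : ℕ) : ℝ) := by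
    push_cast [hij']; ring
  rw [hji]
  field_simp
  ring

/-- Serfling's martingale property: let `X₁, …, X_N` be a uniformly random
without-replacement ordering of a population of `N` reals with mean `μ`
(modeled by a uniformly random permutation `σ`, with `X_t σ = x (σ (t-1))`),
and let `Z_k = (Σ_{t=1}^k (X_t - μ)) / (N - k)`.  Then `(Z_k)_{0 ≤ k ≤ N-1}`
is a martingale with respect to the natural filtration of `(X_t)`
(where `ℱ_k = σ(X₁, …, X_k)` and `ℱ_0` is trivial). -/
theorem serfling_martingale
    (N : ℕ) (x : Fin N → ℝ) (μ : ℝ) (hμ : μ = (∑ i, x i) / N)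
    (u : Fin N → Equiv.Perm (Fin N) → ℝ)
    (hu_def : ∀ (k : Fin N) (σ : Equiv.Perm (Fin N)),
      u k σ = if hk : (k : ℕ) = 0 then 0
              else x (σ ⟨(k : ℕ) - 1, lt_of_le_of_lt (Nat.pred_le _) k.isLt⟩))
    (hu : ∀ i, StronglyMeasurable (u i))
    (Z : Fin N → Equiv.Perm (Fin N) → ℝ)
    (hZ : ∀ (k : Fin N) (σ : Equiv.Perm (Fin N)),
      Z k σ = (∑ t : Fin N, if (t : ℕ) < (k : ℕ) then x (σ t) - μ else 0)
                / ((N : ℝ) - (k : ℕ))) :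
    Martingale Z (Filtration.natural u hu)
      ((PMF.uniformOfFintype (Equiv.Perm (Fin N))).toMeasure) := by
  classical
  set ℱ := Filtration.natural u hu with hℱ
  set P := (PMF.uniformOfFintype (Equiv.Perm (Fin N))).toMeasure with hP
  -- the population sum identity
  have hsum : ∑ a, x a = N * μ := by
    rcases Nat.eq_zero_or_pos N with h | h
    · subst h
      simp only [Nat.cast_zero, zero_mul]
      exact Finset.sum_of_isEmpty _
    · have hN : (N : ℝ) ≠ 0 := Nat.cast_ne_zero.2 h.ne'
      rw [hμ]
      field_simp
  -- reindexing : the partial sums are functions of `u 0, …, u k`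
  have hreindex : ∀ (k : Fin N) (σ : Equiv.Perm (Fin N)),
      ∑ m ∈ Finset.univ.filter (fun m : Fin N => (m : ℕ) ≤ (k : ℕ)), u m σ
        = ∑ t : Fin N, if (t : ℕ) < (k : ℕ) then x (σ t) else 0 := by
    intro k σ
    rw [← Finset.sum_filter]
    have hsub : Finset.univ.filter (fun m : Fin N => 0 < (m : ℕ) ∧ (m : ℕ) ≤ (k : ℕ))
        ⊆ Finset.univ.filter (fun m : Fin N => (m : ℕ) ≤ (k : ℕ)) := by
      intro m hm
      simp only [Finset.mem_filter, Finset.mem_univ, true_and] at hm ⊢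
      exact hm.2
    rw [← Finset.sum_subset hsub ?van]
    case van =>
      intro m hm hm2
      simp only [Finset.mem_filter, Finset.mem_univ, true_and, not_and, not_le] at hm hm2
      have hm0 : (m : ℕ) = 0 := by omega
      rw [hu_def, dif_pos hm0]
    refine Finset.sum_bij'
      (fun (m : Fin N) _ => (⟨(m : ℕ) - 1, lt_of_le_of_lt (Nat.pred_le _) m.isLt⟩ : Fin N))
      (fun (t : Fin N) ht => (⟨(t : ℕ) + 1, by
        simp only [Finset.mem_filter, Finset.mem_univ, true_and] at ht
        have := k.isLt; omega⟩ : Fin N)) ?_ ?_ ?_ ?_ ?_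
    · intro m hm
      simp only [Finset.mem_filter, Finset.mem_univ, true_and] at hm ⊢
      omega
    · intro t ht
      simp only [Finset.mem_filter, Finset.mem_univ, true_and] at ht ⊢
      omega
    · intro m hm
      simp only [Finset.mem_filter, Finset.mem_univ, true_and] at hm
      apply Fin.ext
      simp
      omega
    · intro t ht
      apply Fin.ext
      simp
    · intro m hm
      simp only [Finset.mem_filter, Finset.mem_univ, true_and] at hm
      rw [hu_def, dif_neg (by omega)]
  -- the value of `Z k` as a function of the `u m`, `m ≤ k`
  have hZfun : ∀ k : Fin N, Z k = fun σ =>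
      ((∑ m ∈ Finset.univ.filter (fun m : Fin N => (m : ℕ) ≤ (k : ℕ)), u m σ)
        - (k : ℕ) * μ) / ((N : ℝ) - (k : ℕ)) := by
    intro k
    funext σ
    rw [hZ, hreindex]
    congr 1
    have h1 : ∀ t : Fin N, (if (t : ℕ) < (k : ℕ) then x (σ t) - μ else 0)
        = (if (t : ℕ) < (k : ℕ) then x (σ t) else 0)
          - (if (t : ℕ) < (k : ℕ) then μ else 0) := by
      intro t; split_ifs <;> ring
    rw [Finset.sum_congr rfl (fun t _ => h1 t), Finset.sum_sub_distrib]
    congr 1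
    rw [← Finset.sum_filter, Finset.sum_const]
    have : Finset.univ.filter (fun t : Fin N => (t : ℕ) < (k : ℕ))
        = Finset.univ.filter (fun t : Fin N => 0 ≤ (t : ℕ) ∧ (t : ℕ) < (k : ℕ)) := by
      refine (Finset.filter_congr fun t _ => ?_).symm; simp
    rw [this, count_aux N 0 (k : ℕ) (le_of_lt k.isLt), nsmul_eq_mul, Nat.sub_zero]
  -- adaptedness
  have hadapted : StronglyAdapted ℱ Z := by
    intro k
    rw [hZfun k]
    have hum : ∀ m : Fin N, (m : ℕ) ≤ (k : ℕ) → Measurable[ℱ k] (u m) := by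
      intro m hm
      have hle : MeasurableSpace.comap (u m) inferInstance ≤ ℱ k := by
        rw [hℱ]
        exact le_iSup₂ (f := fun j (_ : j ≤ k) =>
          MeasurableSpace.comap (u j) inferInstance) m (by exact Fin.mk_le_mk.mpr hm)
      exact fun s hs => hle _ ⟨s, hs, rfl⟩
    refine Measurable.stronglyMeasurable ?_
    exact (((Finset.measurable_sum _ (fun m hm => hum m (by
      simpa using hm))).sub measurable_const).div_const _)
  refine ⟨hadapted, fun i j hij => ?_⟩
  -- conditional expectation property
  haveI : SigmaFinite (P.trim (ℱ.le i)) := by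
    have : IsFiniteMeasure (P.trim (ℱ.le i)) := isFiniteMeasure_trim _
    infer_instance
  refine (ae_eq_condExp_of_forall_setIntegral_eq (ℱ.le i) (Integrable.of_finite)
    (fun s _ _ => Integrable.of_finite.integrableOn) ?_
    ((hadapted i).aestronglyMeasurable)).symm
  intro s hs _
  -- `s` is measurable w.r.t. the σ-algebra generated by `σ 0, …, σ (i-1)`
  set Φ : Equiv.Perm (Fin N) → (Fin N → Option (Fin N)) :=
    fun σ t => if (t : ℕ) < (i : ℕ) then some (σ t) else none with hΦ
  have hFG : ℱ i ≤ MeasurableSpace.comap Φ ⊤ := by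
    rw [hℱ]
    refine iSup₂_le fun m hm => ?_
    have hm' : (m : ℕ) ≤ (i : ℕ) := hm
    have hcomp : u m = (fun f : Fin N → Option (Fin N) =>
        if hk : (m : ℕ) = 0 then 0
        else (f ⟨(m : ℕ) - 1, lt_of_le_of_lt (Nat.pred_le _) m.isLt⟩).elim 0 x) ∘ Φ := by
      funext σ
      rw [hu_def]
      by_cases h0 : (m : ℕ) = 0
      · simp [h0]
      · rw [dif_neg h0, Function.comp_apply, dif_neg h0, hΦ]
        simp only
        rw [if_pos (by omega)]
        rfl
    rw [hcomp, ← MeasurableSpace.comap_comp]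
    exact MeasurableSpace.comap_mono le_top
  obtain ⟨A, -, rfl⟩ := MeasurableSpace.measurableSet_comap.1 (hFG s hs)
  -- turn the set integrals into sums
  have hint : ∀ f : Equiv.Perm (Fin N) → ℝ,
      ∫ σ in Φ ⁻¹' A, f σ ∂P
        = ∑ σ : Equiv.Perm (Fin N),
            ((PMF.uniformOfFintype (Equiv.Perm (Fin N))) σ).toReal
              • Set.indicator (Φ ⁻¹' A) f σ := by
    intro f
    rw [← integral_indicator MeasurableSpace.measurableSet_top, hP, PMF.integral_eq_sum]
  rw [hint, hint]
  -- the uniform weights are constant, so it suffices to compare plain sums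
  have hw : ∀ σ : Equiv.Perm (Fin N),
      ((PMF.uniformOfFintype (Equiv.Perm (Fin N))) σ).toReal
        = (((Fintype.card (Equiv.Perm (Fin N)) : ENNReal))⁻¹).toReal := by
    intro σ; rw [PMF.uniformOfFintype_apply]
  simp only [hw]
  rw [← Finset.smul_sum, ← Finset.smul_sum]
  congr 1
  -- rewrite the indicators as `if` and group the permutations by their fibers under `Φ`
  have hind : ∀ (f : Equiv.Perm (Fin N) → ℝ) (σ : Equiv.Perm (Fin N)),
      Set.indicator (Φ ⁻¹' A) f σ = if Φ σ ∈ A then f σ else 0 := by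
    intro f σ
    rw [Set.indicator_apply]
    congr 1
  rw [Finset.sum_congr rfl (fun σ _ => hind (Z i) σ),
    Finset.sum_congr rfl (fun σ _ => hind (Z j) σ),
    ← Finset.sum_fiberwise_of_maps_to (g := Φ) (fun σ _ => Finset.mem_univ (Φ σ))
      (fun σ => if Φ σ ∈ A then Z i σ else 0),
    ← Finset.sum_fiberwise_of_maps_to (g := Φ) (fun σ _ => Finset.mem_univ (Φ σ))
      (fun σ => if Φ σ ∈ A then Z j σ else 0)]
  refine Finset.sum_congr rfl fun y _ => ?_
  have hfix : ∀ (f : Equiv.Perm (Fin N) → ℝ),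
      ∑ σ ∈ Finset.univ.filter (fun σ => Φ σ = y), (if Φ σ ∈ A then f σ else 0)
        = if y ∈ A then ∑ σ ∈ Finset.univ.filter (fun σ => Φ σ = y), f σ else 0 := by
    intro f
    have : ∀ σ ∈ Finset.univ.filter (fun σ => Φ σ = y),
        (if Φ σ ∈ A then f σ else 0) = (if y ∈ A then f σ else 0) := by
      intro σ hσ
      rw [(Finset.mem_filter.1 hσ).2]
    rw [Finset.sum_congr rfl this]
    split_ifs
    · rfl
    · exact Finset.sum_const_zero
  rw [hfix, hfix]
  split_ifs with hyA
  swap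
  · rfl
  -- now a fiberwise identity, trivial when the fiber is empty
  rcases Finset.eq_empty_or_nonempty (Finset.univ.filter (fun σ => Φ σ = y)) with hemp | hne
  · rw [hemp]; simp
  obtain ⟨σ₀, hσ₀⟩ := hne
  have hy : Φ σ₀ = y := (Finset.mem_filter.1 hσ₀).2
  have hfib : Finset.univ.filter (fun σ : Equiv.Perm (Fin N) => Φ σ = y)
      = Finset.univ.filter
          (fun σ : Equiv.Perm (Fin N) => ∀ t : Fin N, (t : ℕ) < (i : ℕ) → σ t = σ₀ t) := by
    refine Finset.filter_congr fun σ _ => ?_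
    rw [← hy]
    constructor
    · intro h t ht
      have := congrFun h t
      rw [hΦ] at this
      simp only [if_pos ht] at this
      exact Option.some_injective _ this
    · intro h
      funext t
      by_cases ht : (t : ℕ) < (i : ℕ)
      · simp only [hΦ, if_pos ht, h t ht]
      · simp only [hΦ, if_neg ht]
  rw [hfib]
  rw [Finset.sum_congr rfl (fun σ _ => hZ i σ), Finset.sum_congr rfl (fun σ _ => hZ j σ)]
  exact (fiber_eq x μ hsum i j hij σ₀).symm
end

section
/- (Hoeffding–Serfling maximal inequality) Let D = {x₁,…,x_N} ⊆ [a,b] with mean μ, and X₁,…,X_N a uniformly random without-replacement ordering. For every 1 ≤ m ≤ N−1 and ε > 0, P( max_{1≤k≤m} (Σ_{t=1}^k (X_t − μ))/(N−k) ≥ mε/(N−m) ) ≤ exp( −2mε² / ((1−(m−1)/N)(b−a)²) ). -/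
open scoped Classical

lemma gpos (p : ℝ) (hp0 : 0 ≤ p) (hp1 : p ≤ 1) (h : ℝ) : 0 < 1 - p + p * Real.exp h := by
  rcases eq_or_lt_of_le hp1 with h1 | h1
  · rw [h1]; simpa using Real.exp_pos h
  · have := mul_nonneg hp0 (Real.exp_pos h).le
    linarith

lemma hoeff_core (p : ℝ) (hp0 : 0 ≤ p) (hp1 : p ≤ 1) (h : ℝ) (hh : 0 ≤ h) :
    1 - p + p * Real.exp h ≤ Real.exp (p * h + h ^ 2 / 8) := by
  have hg := gpos p hp0 hp1
  set φ : ℝ → ℝ := fun y => p * y + y ^ 2 / 8 - Real.log (1 - p + p * Real.exp y) with hφ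
  set f1 : ℝ → ℝ := fun y => p + y / 4 - p * Real.exp y / (1 - p + p * Real.exp y) with hf1
  have hdφ : ∀ y, HasDerivAt φ (f1 y) y := by
    intro y
    have h1 : HasDerivAt (fun y : ℝ => p * y + y ^ 2 / 8) (p + y / 4) y := by
      have := ((hasDerivAt_id y).const_mul p).add ((hasDerivAt_pow 2 y).div_const 8)
      refine this.congr_deriv ?_; push_cast; ring
    have hgy : HasDerivAt (fun y : ℝ => 1 - p + p * Real.exp y) (p * Real.exp y) y :=
      ((Real.hasDerivAt_exp y).const_mul p).const_add (1 - p)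
    have h2 := hgy.log (hg y).ne'
    exact h1.sub h2
  have hdf1 : ∀ y, HasDerivAt f1
      (1 / 4 - p * Real.exp y * (1 - p) / (1 - p + p * Real.exp y) ^ 2) y := by
    intro y
    have hgy : HasDerivAt (fun y : ℝ => 1 - p + p * Real.exp y) (p * Real.exp y) y :=
      ((Real.hasDerivAt_exp y).const_mul p).const_add (1 - p)
    have hn : HasDerivAt (fun y : ℝ => p * Real.exp y) (p * Real.exp y) y :=
      (Real.hasDerivAt_exp y).const_mul p
    have hq := hn.div hgy (hg y).ne'
    have h1 : HasDerivAt (fun y : ℝ => p + y / 4) (1 / 4) y := by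
      simpa using ((hasDerivAt_id y).div_const 4).const_add p
    have := h1.sub hq
    refine this.congr_deriv ?_
    have := (hg y).ne'
    field_simp
    ring
  have hf1nonneg : ∀ y, 0 ≤ y → 0 ≤ f1 y := by
    intro y hy
    have hmono : Monotone f1 := by
      apply monotone_of_deriv_nonneg
      · exact fun y => (hdf1 y).differentiableAt
      · intro y
        rw [(hdf1 y).deriv]
        rw [sub_nonneg, div_le_iff₀ (pow_pos (hg y) 2)]
        nlinarith [sq_nonneg (1 - p - p * Real.exp y), Real.exp_pos y,
          mul_nonneg hp0 (Real.exp_pos y).le]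
    have h0 : f1 0 = 0 := by
      simp only [hf1, Real.exp_zero, mul_one]
      field_simp
      ring
    have := hmono hy
    rw [h0] at this
    exact this
  have hφmono : MonotoneOn φ (Set.Ici 0) := by
    apply monotoneOn_of_deriv_nonneg (convex_Ici 0)
    · exact (Continuous.continuousOn (by
        have : Differentiable ℝ φ := fun y => (hdφ y).differentiableAt
        exact this.continuous))
    · intro y hy
      exact ((hdφ y).differentiableAt).differentiableWithinAt
    · intro y hy
      rw [interior_Ici] at hy
      rw [(hdφ y).deriv]
      exact hf1nonneg y (le_of_lt hy)
  have hφ0 : φ 0 = 0 := by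
    simp [hφ, Real.exp_zero]
  have hmain : 0 ≤ φ h := by
    have := hφmono (Set.self_mem_Ici) (Set.mem_Ici.mpr hh) hh
    rw [hφ0] at this; exact this
  have : Real.log (1 - p + p * Real.exp h) ≤ p * h + h ^ 2 / 8 := by
    simp only [hφ] at hmain; linarith
  calc 1 - p + p * Real.exp h
      = Real.exp (Real.log (1 - p + p * Real.exp h)) := (Real.exp_log (hg h)).symm
    _ ≤ Real.exp (p * h + h ^ 2 / 8) := Real.exp_le_exp.mpr this

lemma finset_jensen {ι : Type*} (t : Finset ι) (ht : t.Nonempty) (y : ι → ℝ) :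
    (t.card : ℝ) * Real.exp ((∑ i ∈ t, y i) / t.card) ≤ ∑ i ∈ t, Real.exp (y i) := by
  have hc : (0:ℝ) < t.card := by exact_mod_cast Finset.card_pos.mpr ht
  have := convexOn_exp.map_sum_le (t := t) (w := fun _ => (t.card : ℝ)⁻¹) (p := y)
    (fun i _ => by positivity)
    (by rw [Finset.sum_const, nsmul_eq_mul, mul_inv_cancel₀ hc.ne'])
    (fun i _ => Set.mem_univ _)
  simp only [smul_eq_mul] at this
  rw [← Finset.mul_sum, inv_mul_eq_div] at this
  rw [← Finset.mul_sum] at this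
  calc (t.card : ℝ) * Real.exp ((∑ i ∈ t, y i) / t.card) ≤
      (t.card : ℝ) * ((t.card : ℝ)⁻¹ * ∑ i ∈ t, Real.exp (y i)) := by
        apply mul_le_mul_of_nonneg_left _ hc.le
        exact this
    _ = ∑ i ∈ t, Real.exp (y i) := by field_simp

lemma finset_hoeffding {ι : Type*} (t : Finset ι) (ht : t.Nonempty) (y : ι → ℝ)
    (A B : ℝ) (hAB : A < B) (hy : ∀ i ∈ t, y i ∈ Set.Icc A B) :
    ∑ i ∈ t, Real.exp (y i)
      ≤ (t.card : ℝ) * Real.exp ((∑ i ∈ t, y i) / t.card + (B - A) ^ 2 / 8) := by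
  have hc : (0:ℝ) < t.card := by exact_mod_cast Finset.card_pos.mpr ht
  have hBA : (0:ℝ) < B - A := by linarith
  have chord : ∀ i ∈ t, Real.exp (y i)
      ≤ ((B - y i) * Real.exp A + (y i - A) * Real.exp B) / (B - A) := by
    intro i hi
    obtain ⟨h1, h2⟩ := hy i hi
    have key := convexOn_exp.2 (Set.mem_univ A) (Set.mem_univ B)
      (show (0:ℝ) ≤ (B - y i) / (B - A) from div_nonneg (by linarith) hBA.le)
      (show (0:ℝ) ≤ (y i - A) / (B - A) from div_nonneg (by linarith) hBA.le)
      (show (B - y i) / (B - A) + (y i - A) / (B - A) = 1 by field_simp; ring)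
    simp only [smul_eq_mul] at key
    have heq : (B - y i) / (B - A) * A + (y i - A) / (B - A) * B = y i := by
      field_simp; ring
    rw [heq] at key
    calc Real.exp (y i) ≤ (B - y i) / (B - A) * Real.exp A + (y i - A) / (B - A) * Real.exp B :=
          key
      _ = ((B - y i) * Real.exp A + (y i - A) * Real.exp B) / (B - A) := by ring
  set m0 : ℝ := (∑ i ∈ t, y i) / t.card with hm0
  have hsum : ∑ i ∈ t, y i = t.card * m0 := by rw [hm0]; field_simp
  have e1 : ∑ i ∈ t, (B - y i) = B * t.card - ∑ i ∈ t, y i := by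
    rw [Finset.sum_sub_distrib, Finset.sum_const, nsmul_eq_mul]; ring
  have e2 : ∑ i ∈ t, (y i - A) = (∑ i ∈ t, y i) - A * t.card := by
    rw [Finset.sum_sub_distrib, Finset.sum_const, nsmul_eq_mul]; ring
  have step1 : ∑ i ∈ t, Real.exp (y i)
      ≤ (t.card : ℝ) * (((B - m0) * Real.exp A + (m0 - A) * Real.exp B) / (B - A)) := by
    calc ∑ i ∈ t, Real.exp (y i)
        ≤ ∑ i ∈ t, ((B - y i) * Real.exp A + (y i - A) * Real.exp B) / (B - A) :=
          Finset.sum_le_sum chord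
      _ = ((∑ i ∈ t, (B - y i)) * Real.exp A + (∑ i ∈ t, (y i - A)) * Real.exp B) / (B - A) := by
          rw [← Finset.sum_div, Finset.sum_add_distrib, ← Finset.sum_mul, ← Finset.sum_mul]
      _ = (t.card : ℝ) * (((B - m0) * Real.exp A + (m0 - A) * Real.exp B) / (B - A)) := by
          rw [e1, e2, hsum]; ring
  set p : ℝ := (m0 - A) / (B - A) with hp
  have hm0A : A ≤ m0 := by
    rw [hm0, le_div_iff₀ hc]
    calc A * t.card = ∑ _i ∈ t, A := by rw [Finset.sum_const, nsmul_eq_mul]; ring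
      _ ≤ ∑ i ∈ t, y i := Finset.sum_le_sum fun i hi => (hy i hi).1
  have hm0B : m0 ≤ B := by
    rw [hm0, div_le_iff₀ hc]
    calc (∑ i ∈ t, y i) ≤ ∑ _i ∈ t, B := Finset.sum_le_sum fun i hi => (hy i hi).2
      _ = B * t.card := by rw [Finset.sum_const, nsmul_eq_mul]; ring
  have hp0 : 0 ≤ p := by rw [hp]; apply div_nonneg (by linarith) hBA.le
  have hp1 : p ≤ 1 := by rw [hp, div_le_one hBA]; linarith
  have key : ((B - m0) * Real.exp A + (m0 - A) * Real.exp B) / (B - A)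
      ≤ Real.exp (m0 + (B - A) ^ 2 / 8) := by
    have h1 : ((B - m0) * Real.exp A + (m0 - A) * Real.exp B) / (B - A)
        = Real.exp A * (1 - p + p * Real.exp (B - A)) := by
      rw [hp, Real.exp_sub]
      have hA := Real.exp_ne_zero A
      field_simp
      ring
    rw [h1]
    have h2 := hoeff_core p hp0 hp1 (B - A) hBA.le
    calc Real.exp A * (1 - p + p * Real.exp (B - A))
        ≤ Real.exp A * Real.exp (p * (B - A) + (B - A) ^ 2 / 8) :=
          mul_le_mul_of_nonneg_left h2 (Real.exp_pos A).le
      _ = Real.exp (A + (p * (B - A) + (B - A) ^ 2 / 8)) := (Real.exp_add _ _).symm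
      _ = Real.exp (m0 + (B - A) ^ 2 / 8) := by
          congr 1
          rw [hp]
          field_simp
          ring
  calc ∑ i ∈ t, Real.exp (y i)
      ≤ (t.card : ℝ) * (((B - m0) * Real.exp A + (m0 - A) * Real.exp B) / (B - A)) := step1
    _ ≤ (t.card : ℝ) * Real.exp (m0 + (B - A) ^ 2 / 8) :=
        mul_le_mul_of_nonneg_left key hc.le

noncomputable def Sf (N : ℕ) (x : Fin N → ℝ) (μ : ℝ) (k : ℕ) (σ : Equiv.Perm (Fin N)) : ℝ :=
  ∑ t : Fin N, if (t : ℕ) < k then x (σ t) - μ else 0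

lemma Sf_prefix (N : ℕ) (x : Fin N → ℝ) (μ : ℝ) (k : ℕ) (σ σ' : Equiv.Perm (Fin N))
    (h : ∀ t : Fin N, (t : ℕ) < k → σ t = σ' t) : Sf N x μ k σ = Sf N x μ k σ' := by
  unfold Sf
  apply Finset.sum_congr rfl
  intro t _
  by_cases ht : (t : ℕ) < k
  · simp [ht, h t ht]
  · simp [ht]

lemma Sf_zero (N : ℕ) (x : Fin N → ℝ) (μ : ℝ) (σ : Equiv.Perm (Fin N)) : Sf N x μ 0 σ = 0 := by
  unfold Sf; simp

lemma Sf_succ (N : ℕ) (x : Fin N → ℝ) (μ : ℝ) (k : ℕ) (hk : k < N) (σ : Equiv.Perm (Fin N)) :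
    Sf N x μ (k + 1) σ = Sf N x μ k σ + (x (σ ⟨k, hk⟩) - μ) := by
  unfold Sf
  have split : ∀ t : Fin N, (if (t : ℕ) < k + 1 then x (σ t) - μ else 0)
      = (if (t : ℕ) < k then x (σ t) - μ else 0) + (if t = ⟨k, hk⟩ then x (σ t) - μ else 0) := by
    intro t
    rcases lt_trichotomy (t : ℕ) k with h | h | h
    · have h1 : (t : ℕ) < k + 1 := by omega
      have h2 : t ≠ ⟨k, hk⟩ := Fin.ne_of_val_ne (by simpa using by omega)
      simp [h, h1, h2]
    · have h1 : (t : ℕ) < k + 1 := by omega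
      have h2 : t = ⟨k, hk⟩ := by apply Fin.ext; simpa using h
      have h3 : ¬ (t : ℕ) < k := by omega
      simp [h1, h2, h3]
    · have h1 : ¬ (t : ℕ) < k + 1 := by omega
      have h2 : t ≠ ⟨k, hk⟩ := Fin.ne_of_val_ne (by simpa using by omega)
      have h3 : ¬ (t : ℕ) < k := by omega
      simp [h1, h2, h3]
  rw [Finset.sum_congr rfl (fun t _ => split t), Finset.sum_add_distrib]
  congr 1
  rw [Finset.sum_ite_eq' Finset.univ (⟨k, hk⟩ : Fin N) (fun t => x (σ t) - μ)]
  simp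

lemma swap_prefix (N : ℕ) (k : ℕ) (hk : k < N) (j : Fin N) (hkj : k ≤ (j : ℕ))
    (σ : Equiv.Perm (Fin N)) (t : Fin N) (ht : (t : ℕ) < k) :
    (σ * Equiv.swap ⟨k, hk⟩ j) t = σ t := by
  rw [Equiv.Perm.mul_apply]
  congr 1
  apply Equiv.swap_apply_of_ne_of_ne
  · exact Fin.ne_of_val_ne (by simp; omega)
  · exact Fin.ne_of_val_ne (by omega)

lemma swap_at (N : ℕ) (k : ℕ) (hk : k < N) (j : Fin N) (σ : Equiv.Perm (Fin N)) :
    (σ * Equiv.swap ⟨k, hk⟩ j) ⟨k, hk⟩ = σ j := by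
  rw [Equiv.Perm.mul_apply, Equiv.swap_apply_left]

lemma sum_mul_right (N : ℕ) (f : Equiv.Perm (Fin N) → ℝ) (c : Equiv.Perm (Fin N)) :
    ∑ σ : Equiv.Perm (Fin N), f (σ * c) = ∑ σ : Equiv.Perm (Fin N), f σ :=
  Equiv.sum_comp (Equiv.mulRight c) f

lemma card_filter_lt (N k : ℕ) (hk : k ≤ N) :
    (Finset.univ.filter (fun t : Fin N => (t : ℕ) < k)).card = k := by
  rw [← Finset.card_range k]
  apply Finset.card_bij (fun (t : Fin N) _ => (t : ℕ))
  · intro t ht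
    simp only [Finset.mem_filter] at ht
    simpa using ht.2
  · intro t1 h1 t2 h2 he
    exact Fin.ext he
  · intro b hb
    simp only [Finset.mem_range] at hb
    exact ⟨⟨b, lt_of_lt_of_le hb hk⟩, by simp [hb], rfl⟩

lemma card_filter_ge (N k : ℕ) (hk : k ≤ N) :
    (Finset.univ.filter (fun t : Fin N => k ≤ (t : ℕ))).card = N - k := by
  have h1 := Finset.card_filter_add_card_filter_not
    (s := (Finset.univ : Finset (Fin N))) (p := fun t : Fin N => (t : ℕ) < k)
  simp only [not_lt] at h1
  rw [card_filter_lt N k hk] at h1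
  simp only [Finset.card_univ, Fintype.card_fin] at h1
  omega

lemma avg_identity (N k : ℕ) (hk : k < N) (f : Equiv.Perm (Fin N) → ℝ) :
    ((N : ℝ) - k) * ∑ σ : Equiv.Perm (Fin N), f σ
      = ∑ σ : Equiv.Perm (Fin N), ∑ j ∈ Finset.univ.filter (fun j : Fin N => k ≤ (j : ℕ)),
          f (σ * Equiv.swap ⟨k, hk⟩ j) := by
  rw [Finset.sum_comm]
  have : ∀ j ∈ Finset.univ.filter (fun j : Fin N => k ≤ (j : ℕ)),
      ∑ σ : Equiv.Perm (Fin N), f (σ * Equiv.swap ⟨k, hk⟩ j)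
        = ∑ σ : Equiv.Perm (Fin N), f σ := fun j _ => sum_mul_right N f _
  rw [Finset.sum_congr rfl this, Finset.sum_const, card_filter_ge N k hk.le, nsmul_eq_mul]
  congr 1
  push_cast [Nat.cast_sub hk.le]
  ring

lemma Sf_filter (N : ℕ) (x : Fin N → ℝ) (μ : ℝ) (k : ℕ) (σ : Equiv.Perm (Fin N)) :
    Sf N x μ k σ = ∑ t ∈ Finset.univ.filter (fun t : Fin N => (t : ℕ) < k), (x (σ t) - μ) :=
  (Finset.sum_filter _ _).symm

lemma value_mean (N : ℕ) (x : Fin N → ℝ) (μ : ℝ) (hsum : ∑ i, x i = N * μ)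
    (k : ℕ) (hk : k < N) (σ : Equiv.Perm (Fin N)) :
    ∑ j ∈ Finset.univ.filter (fun j : Fin N => k ≤ (j : ℕ)),
        (Sf N x μ k σ + (x (σ j) - μ))
      = ((N : ℝ) - k - 1) * Sf N x μ k σ := by
  have hxval : ∑ j ∈ Finset.univ.filter (fun j : Fin N => k ≤ (j : ℕ)), x (σ j)
      = (N : ℝ) * μ - ∑ t ∈ Finset.univ.filter (fun t : Fin N => (t : ℕ) < k), x (σ t) := by
    have h1 := Finset.sum_filter_add_sum_filter_not (Finset.univ : Finset (Fin N))
      (fun t : Fin N => (t : ℕ) < k) (fun t => x (σ t))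
    have h2 : ∑ t : Fin N, x (σ t) = ∑ i, x i := Equiv.sum_comp σ x
    simp only [not_lt] at h1
    rw [h2, hsum] at h1
    linarith
  have hSfx : ∑ t ∈ Finset.univ.filter (fun t : Fin N => (t : ℕ) < k), x (σ t)
      = Sf N x μ k σ + k * μ := by
    rw [Sf_filter, Finset.sum_sub_distrib, Finset.sum_const, card_filter_lt N k hk.le,
      nsmul_eq_mul]
    ring
  rw [Finset.sum_add_distrib, Finset.sum_const, card_filter_ge N k hk.le, nsmul_eq_mul,
    Finset.sum_sub_distrib, Finset.sum_const, card_filter_ge N k hk.le, nsmul_eq_mul,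
    hxval, hSfx]
  push_cast [Nat.cast_sub hk.le]
  ring

section Steps

variable (N : ℕ) (x : Fin N → ℝ) (μ : ℝ)

-- the rewriting of the inner sum after swap-averaging
lemma inner_rewrite (k : ℕ) (hk : k + 1 < N) (s : ℝ) (w : Equiv.Perm (Fin N) → ℝ)
    (hwpre : ∀ σ σ' : Equiv.Perm (Fin N), (∀ t : Fin N, (t : ℕ) < k → σ t = σ' t) → w σ = w σ')
    (σ : Equiv.Perm (Fin N)) :
    ∑ j ∈ Finset.univ.filter (fun j : Fin N => k ≤ (j : ℕ)),
        (fun τ => w τ * Real.exp (s * Sf N x μ (k + 1) τ / ((N : ℝ) - k - 1)))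
          (σ * Equiv.swap ⟨k, by omega⟩ j)
      = w σ * ∑ j ∈ Finset.univ.filter (fun j : Fin N => k ≤ (j : ℕ)),
          Real.exp (s * (Sf N x μ k σ + (x (σ j) - μ)) / ((N : ℝ) - k - 1)) := by
  rw [Finset.mul_sum]
  apply Finset.sum_congr rfl
  intro j hj
  have hkj : k ≤ (j : ℕ) := (Finset.mem_filter.mp hj).2
  have hkN : k < N := by omega
  have hpre : ∀ t : Fin N, (t : ℕ) < k → (σ * Equiv.swap ⟨k, hkN⟩ j) t = σ t :=
    fun t ht => swap_prefix N k hkN j hkj σ t ht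
  have hw : w (σ * Equiv.swap ⟨k, hkN⟩ j) = w σ := hwpre _ _ hpre
  have hS : Sf N x μ (k + 1) (σ * Equiv.swap ⟨k, hkN⟩ j)
      = Sf N x μ k σ + (x (σ j) - μ) := by
    rw [Sf_succ N x μ k hkN, Sf_prefix N x μ k _ σ hpre, swap_at]
  simp only []
  rw [hw, hS]

lemma sub_step (hsum : ∑ i, x i = N * μ) (k : ℕ) (hk : k + 1 < N) (s : ℝ)
    (w : Equiv.Perm (Fin N) → ℝ) (hw0 : ∀ σ, 0 ≤ w σ)
    (hwpre : ∀ σ σ' : Equiv.Perm (Fin N), (∀ t : Fin N, (t : ℕ) < k → σ t = σ' t) → w σ = w σ') :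
    ∑ σ : Equiv.Perm (Fin N), w σ * Real.exp (s * Sf N x μ k σ / ((N : ℝ) - k))
      ≤ ∑ σ : Equiv.Perm (Fin N), w σ * Real.exp (s * Sf N x μ (k + 1) σ / ((N : ℝ) - k - 1)) := by
  have hkN : k < N := by omega
  have hNk : (0 : ℝ) < (N : ℝ) - k := by
    have : (k : ℝ) < N := by exact_mod_cast hkN
    linarith
  rw [← mul_le_mul_iff_right₀ hNk]
  rw [avg_identity N k hkN (fun τ => w τ * Real.exp (s * Sf N x μ (k + 1) τ / ((N : ℝ) - k - 1)))]
  rw [Finset.mul_sum]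
  apply Finset.sum_le_sum
  intro σ _
  rw [inner_rewrite N x μ k hk s w hwpre σ]
  set J := Finset.univ.filter (fun j : Fin N => k ≤ (j : ℕ)) with hJ
  have hcard : (J.card : ℝ) = (N : ℝ) - k := by
    rw [hJ, card_filter_ge N k hkN.le]
    push_cast [Nat.cast_sub hkN.le]
    ring
  have hJne : J.Nonempty := by
    rw [← Finset.card_pos]
    have : (0:ℝ) < (J.card : ℝ) := by rw [hcard]; exact hNk
    exact_mod_cast this
  have hmean : (∑ j ∈ J, s * (Sf N x μ k σ + (x (σ j) - μ)) / ((N : ℝ) - k - 1)) / (J.card : ℝ)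
      = s * Sf N x μ k σ / ((N : ℝ) - k) := by
    have hsum2 : ∑ j ∈ J, s * (Sf N x μ k σ + (x (σ j) - μ)) / ((N : ℝ) - k - 1)
        = (s / ((N : ℝ) - k - 1)) * (((N : ℝ) - k - 1) * Sf N x μ k σ) := by
      rw [← value_mean N x μ hsum k hkN σ, Finset.mul_sum]
      apply Finset.sum_congr rfl
      intro j _
      ring
    rw [hsum2, hcard]
    have hr : (0 : ℝ) < (N : ℝ) - k - 1 := by
      have : ((k:ℝ) + 1) < N := by exact_mod_cast hk
      linarith
    field_simp
  have hjen := finset_jensen J hJne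
    (fun j => s * (Sf N x μ k σ + (x (σ j) - μ)) / ((N : ℝ) - k - 1))
  rw [hmean, hcard] at hjen
  calc ((N : ℝ) - k) * (w σ * Real.exp (s * Sf N x μ k σ / ((N : ℝ) - k)))
      = w σ * (((N : ℝ) - k) * Real.exp (s * Sf N x μ k σ / ((N : ℝ) - k))) := by ring
    _ ≤ w σ * ∑ j ∈ J, Real.exp (s * (Sf N x μ k σ + (x (σ j) - μ)) / ((N : ℝ) - k - 1)) :=
        mul_le_mul_of_nonneg_left hjen (hw0 σ)

end Steps

lemma mgf_step (N : ℕ) (x : Fin N → ℝ) (μ : ℝ) (a b : ℝ) (hab : a < b)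
    (hx : ∀ i, x i ∈ Set.Icc a b) (hsum : ∑ i, x i = N * μ)
    (k : ℕ) (hk : k + 1 < N) (s : ℝ) (hs : 0 < s) :
    ∑ σ : Equiv.Perm (Fin N), Real.exp (s * Sf N x μ (k + 1) σ / ((N : ℝ) - k - 1))
      ≤ (∑ σ : Equiv.Perm (Fin N), Real.exp (s * Sf N x μ k σ / ((N : ℝ) - k)))
          * Real.exp (s ^ 2 * (b - a) ^ 2 / (8 * ((N : ℝ) - k - 1) ^ 2)) := by
  have hkN : k < N := by omega
  have hNk : (0 : ℝ) < (N : ℝ) - k := by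
    have : (k : ℝ) < N := by exact_mod_cast hkN
    linarith
  have hr : (0 : ℝ) < (N : ℝ) - k - 1 := by
    have : ((k:ℝ) + 1) < N := by exact_mod_cast hk
    linarith
  rw [← mul_le_mul_iff_right₀ hNk]
  have havg := avg_identity N k hkN
    (fun τ => (1:ℝ) * Real.exp (s * Sf N x μ (k + 1) τ / ((N : ℝ) - k - 1)))
  simp only [one_mul] at havg
  rw [havg]
  set J := Finset.univ.filter (fun j : Fin N => k ≤ (j : ℕ)) with hJ
  have hcard : (J.card : ℝ) = (N : ℝ) - k := by
    rw [hJ, card_filter_ge N k hkN.le]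
    push_cast [Nat.cast_sub hkN.le]
    ring
  have hJne : J.Nonempty := by
    rw [← Finset.card_pos]
    have : (0:ℝ) < (J.card : ℝ) := by rw [hcard]; exact hNk
    exact_mod_cast this
  set E : ℝ := Real.exp (s ^ 2 * (b - a) ^ 2 / (8 * ((N : ℝ) - k - 1) ^ 2)) with hE
  calc ∑ σ : Equiv.Perm (Fin N), ∑ j ∈ J,
          Real.exp (s * Sf N x μ (k + 1) (σ * Equiv.swap ⟨k, hkN⟩ j) / ((N : ℝ) - k - 1))
      ≤ ∑ σ : Equiv.Perm (Fin N),
          ((N : ℝ) - k) * (Real.exp (s * Sf N x μ k σ / ((N : ℝ) - k)) * E) := by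
        apply Finset.sum_le_sum
        intro σ _
        have hinner := inner_rewrite N x μ k hk s (fun _ => (1:ℝ)) (fun _ _ _ => rfl) σ
        simp only [one_mul] at hinner
        rw [hinner]
        set A : ℝ := s * (Sf N x μ k σ + (a - μ)) / ((N : ℝ) - k - 1) with hA
        set B : ℝ := s * (Sf N x μ k σ + (b - μ)) / ((N : ℝ) - k - 1) with hB
        have hAB : A < B := by
          rw [hA, hB, div_lt_div_iff₀ hr hr]
          nlinarith [mul_lt_mul_of_pos_left (show Sf N x μ k σ + (a - μ)
            < Sf N x μ k σ + (b - μ) by linarith) hs]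
        have hy : ∀ j ∈ J, s * (Sf N x μ k σ + (x (σ j) - μ)) / ((N : ℝ) - k - 1)
            ∈ Set.Icc A B := by
          intro j _
          constructor
          · rw [hA, div_le_div_iff₀ hr hr]
            nlinarith [mul_le_mul_of_nonneg_left (show Sf N x μ k σ + (a - μ)
              ≤ Sf N x μ k σ + (x (σ j) - μ) by linarith [(hx (σ j)).1]) hs.le]
          · rw [hB, div_le_div_iff₀ hr hr]
            nlinarith [mul_le_mul_of_nonneg_left (show Sf N x μ k σ + (x (σ j) - μ)
              ≤ Sf N x μ k σ + (b - μ) by linarith [(hx (σ j)).2]) hs.le]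
        have hhoef := finset_hoeffding J hJne
          (fun j => s * (Sf N x μ k σ + (x (σ j) - μ)) / ((N : ℝ) - k - 1)) A B hAB hy
        have hmean : (∑ j ∈ J, s * (Sf N x μ k σ + (x (σ j) - μ)) / ((N : ℝ) - k - 1))
            / (J.card : ℝ) = s * Sf N x μ k σ / ((N : ℝ) - k) := by
          have hsum2 : ∑ j ∈ J, s * (Sf N x μ k σ + (x (σ j) - μ)) / ((N : ℝ) - k - 1)
              = (s / ((N : ℝ) - k - 1)) * (((N : ℝ) - k - 1) * Sf N x μ k σ) := by
            rw [← value_mean N x μ hsum k hkN σ, Finset.mul_sum]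
            apply Finset.sum_congr rfl
            intro j _
            ring
          rw [hsum2, hcard]
          field_simp
        have hBA : (B - A) ^ 2 / 8 = s ^ 2 * (b - a) ^ 2 / (8 * ((N : ℝ) - k - 1) ^ 2) := by
          rw [hA, hB]
          field_simp
          ring
        rw [hmean, hcard, hBA] at hhoef
        calc ∑ j ∈ J, Real.exp (s * (Sf N x μ k σ + (x (σ j) - μ)) / ((N : ℝ) - k - 1))
            ≤ ((N : ℝ) - k) * Real.exp (s * Sf N x μ k σ / ((N : ℝ) - k)
                + s ^ 2 * (b - a) ^ 2 / (8 * ((N : ℝ) - k - 1) ^ 2)) := hhoef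
          _ = ((N : ℝ) - k) * (Real.exp (s * Sf N x μ k σ / ((N : ℝ) - k)) * E) := by
              rw [hE, Real.exp_add]
    _ = ((N : ℝ) - k) * ((∑ σ : Equiv.Perm (Fin N),
          Real.exp (s * Sf N x μ k σ / ((N : ℝ) - k))) * E) := by
        rw [← Finset.mul_sum, ← Finset.sum_mul]

lemma mgf_telescope (N : ℕ) (x : Fin N → ℝ) (μ : ℝ) (a b : ℝ) (hab : a < b)
    (hx : ∀ i, x i ∈ Set.Icc a b) (hsum : ∑ i, x i = N * μ) (s : ℝ) (hs : 0 < s)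
    (m : ℕ) (hm : m < N) :
    ∑ σ : Equiv.Perm (Fin N), Real.exp (s * Sf N x μ m σ / ((N : ℝ) - m))
      ≤ (Fintype.card (Equiv.Perm (Fin N)) : ℝ)
          * Real.exp (s ^ 2 * (b - a) ^ 2 / 8 * ∑ j ∈ Finset.Icc 1 m, (1 / ((N : ℝ) - j)) ^ 2) := by
  induction m with
  | zero =>
      simp only [Nat.cast_zero, sub_zero, Finset.Icc_self]
      have h1 : ∀ σ : Equiv.Perm (Fin N), Real.exp (s * Sf N x μ 0 σ / (N : ℝ)) = 1 := by
        intro σ; rw [Sf_zero]; simp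
      rw [Finset.sum_congr rfl (fun σ _ => h1 σ)]
      simp [Finset.card_univ]
  | succ k ih =>
      have hk : k < N := by omega
      have step := mgf_step N x μ a b hab hx hsum k hm s hs
      have hcast : ((N : ℝ) - (k + 1 : ℕ)) = (N : ℝ) - k - 1 := by push_cast; ring
      rw [hcast]
      calc ∑ σ : Equiv.Perm (Fin N), Real.exp (s * Sf N x μ (k + 1) σ / ((N : ℝ) - k - 1))
          ≤ (∑ σ : Equiv.Perm (Fin N), Real.exp (s * Sf N x μ k σ / ((N : ℝ) - k)))
              * Real.exp (s ^ 2 * (b - a) ^ 2 / (8 * ((N : ℝ) - k - 1) ^ 2)) := step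
        _ ≤ ((Fintype.card (Equiv.Perm (Fin N)) : ℝ)
              * Real.exp (s ^ 2 * (b - a) ^ 2 / 8 * ∑ j ∈ Finset.Icc 1 k, (1 / ((N : ℝ) - j)) ^ 2))
              * Real.exp (s ^ 2 * (b - a) ^ 2 / (8 * ((N : ℝ) - k - 1) ^ 2)) := by
            apply mul_le_mul_of_nonneg_right (ih hk) (Real.exp_pos _).le
        _ = (Fintype.card (Equiv.Perm (Fin N)) : ℝ)
              * Real.exp (s ^ 2 * (b - a) ^ 2 / 8
                  * ∑ j ∈ Finset.Icc 1 (k + 1), (1 / ((N : ℝ) - j)) ^ 2) := by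
            rw [mul_assoc, ← Real.exp_add]
            congr 2
            rw [Finset.sum_Icc_succ_top (by omega : 1 ≤ k + 1)]
            have hck : ((N : ℝ) - (k + 1 : ℕ)) = (N : ℝ) - k - 1 := by push_cast; ring
            rw [mul_add, hck]
            congr 1
            rw [div_pow, one_pow, div_mul_div_comm, mul_one]

section Doob

variable (N : ℕ) (x : Fin N → ℝ) (μ : ℝ) (lam s : ℝ)

noncomputable def Hit (K : ℕ) (σ : Equiv.Perm (Fin N)) : Prop :=
  ∃ k ∈ Finset.Icc 1 K, lam ≤ Sf N x μ k σ / ((N : ℝ) - k)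

lemma hit_prefix (K : ℕ) (σ σ' : Equiv.Perm (Fin N))
    (h : ∀ t : Fin N, (t : ℕ) < K → σ t = σ' t) :
    Hit N x μ lam K σ ↔ Hit N x μ lam K σ' := by
  unfold Hit
  constructor <;> rintro ⟨k, hk, hle⟩ <;> refine ⟨k, hk, ?_⟩
  · rwa [Sf_prefix N x μ k σ' σ (fun t ht => (h t (by
      have := (Finset.mem_Icc.mp hk).2; omega)).symm)]
  · rwa [Sf_prefix N x μ k σ σ' (fun t ht => h t (by
      have := (Finset.mem_Icc.mp hk).2; omega))]

lemma hit_succ (K : ℕ) (σ : Equiv.Perm (Fin N)) :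
    Hit N x μ lam (K + 1) σ
      ↔ Hit N x μ lam K σ ∨ lam ≤ Sf N x μ (K + 1) σ / ((N : ℝ) - (K + 1 : ℕ)) := by
  unfold Hit
  constructor
  · rintro ⟨k, hk, hle⟩
    rw [Finset.mem_Icc] at hk
    by_cases hkK : k ≤ K
    · exact Or.inl ⟨k, Finset.mem_Icc.mpr ⟨hk.1, hkK⟩, hle⟩
    · have : k = K + 1 := by omega
      subst this
      exact Or.inr hle
  · rintro (⟨k, hk, hle⟩ | hle)
    · rw [Finset.mem_Icc] at hk
      exact ⟨k, Finset.mem_Icc.mpr ⟨hk.1, by omega⟩, hle⟩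
    · exact ⟨K + 1, Finset.mem_Icc.mpr ⟨by omega, le_refl _⟩, hle⟩

lemma doob (hsum : ∑ i, x i = N * μ) (hs : 0 ≤ s) (m : ℕ) (hm1 : 1 ≤ m) (hmN : m + 1 ≤ N) :
    ∑ σ : Equiv.Perm (Fin N), (if Hit N x μ lam m σ then Real.exp (s * lam) else 0)
      ≤ ∑ σ : Equiv.Perm (Fin N), Real.exp (s * Sf N x μ m σ / ((N : ℝ) - m)) := by
  have Inv : ∀ K, 1 ≤ K → K ≤ m →
      ∑ σ : Equiv.Perm (Fin N), (if Hit N x μ lam K σ then Real.exp (s * lam) else 0)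
        ≤ ∑ σ : Equiv.Perm (Fin N),
            (if Hit N x μ lam K σ then Real.exp (s * Sf N x μ K σ / ((N : ℝ) - K)) else 0) := by
    intro K hK1
    induction K, hK1 using Nat.le_induction with
    | base =>
        intro _
        apply Finset.sum_le_sum
        intro σ _
        by_cases h : Hit N x μ lam 1 σ
        · rw [if_pos h, if_pos h, mul_div_assoc]
          apply Real.exp_le_exp.mpr
          obtain ⟨k, hk, hle⟩ := h
          rw [Finset.mem_Icc] at hk
          have hk1 : k = 1 := by omega
          subst hk1
          exact mul_le_mul_of_nonneg_left hle hs
        · rw [if_neg h, if_neg h]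
    | succ K hK ih =>
        intro hKm
        have ihK := ih (by omega)
        have hcast : ((N : ℝ) - (K + 1 : ℕ)) = (N : ℝ) - K - 1 := by push_cast; ring
        have hsplit : ∀ (g : Equiv.Perm (Fin N) → ℝ) (σ : Equiv.Perm (Fin N)),
            (if Hit N x μ lam (K + 1) σ then g σ else 0)
              = (if Hit N x μ lam K σ then g σ else 0)
                + (if (¬ Hit N x μ lam K σ
                      ∧ lam ≤ Sf N x μ (K + 1) σ / ((N : ℝ) - (K + 1 : ℕ))) then g σ else 0) := by
          intro g σ
          by_cases h1 : Hit N x μ lam K σ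
          · have h2 : Hit N x μ lam (K + 1) σ := (hit_succ N x μ lam K σ).mpr (Or.inl h1)
            rw [if_pos h1, if_pos h2, if_neg (by tauto), add_zero]
          · by_cases h3 : lam ≤ Sf N x μ (K + 1) σ / ((N : ℝ) - (K + 1 : ℕ))
            · have h2 : Hit N x μ lam (K + 1) σ := (hit_succ N x μ lam K σ).mpr (Or.inr h3)
              rw [if_pos h2, if_neg h1, if_pos ⟨h1, h3⟩, zero_add]
            · have h2 : ¬ Hit N x μ lam (K + 1) σ := by
                intro hh
                rcases (hit_succ N x μ lam K σ).mp hh with h | h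
                exacts [h1 h, h3 h]
              rw [if_neg h2, if_neg h1, if_neg (by tauto), add_zero]
        calc ∑ σ : Equiv.Perm (Fin N), (if Hit N x μ lam (K + 1) σ then Real.exp (s * lam) else 0)
            = (∑ σ : Equiv.Perm (Fin N), (if Hit N x μ lam K σ then Real.exp (s * lam) else 0))
              + ∑ σ : Equiv.Perm (Fin N), (if (¬ Hit N x μ lam K σ
                  ∧ lam ≤ Sf N x μ (K + 1) σ / ((N : ℝ) - (K + 1 : ℕ)))
                  then Real.exp (s * lam) else 0) := by
              rw [← Finset.sum_add_distrib]
              exact Finset.sum_congr rfl fun σ _ => hsplit (fun _ => Real.exp (s * lam)) σ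
          _ ≤ (∑ σ : Equiv.Perm (Fin N),
                  (if Hit N x μ lam K σ then Real.exp (s * Sf N x μ K σ / ((N : ℝ) - K)) else 0))
              + ∑ σ : Equiv.Perm (Fin N), (if (¬ Hit N x μ lam K σ
                  ∧ lam ≤ Sf N x μ (K + 1) σ / ((N : ℝ) - (K + 1 : ℕ)))
                  then Real.exp (s * Sf N x μ (K + 1) σ / ((N : ℝ) - (K + 1 : ℕ))) else 0) := by
              apply add_le_add ihK
              apply Finset.sum_le_sum
              intro σ _
              by_cases h : (¬ Hit N x μ lam K σ
                  ∧ lam ≤ Sf N x μ (K + 1) σ / ((N : ℝ) - (K + 1 : ℕ)))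
              · rw [if_pos h, if_pos h, mul_div_assoc]
                exact Real.exp_le_exp.mpr (mul_le_mul_of_nonneg_left h.2 hs)
              · rw [if_neg h, if_neg h]
          _ ≤ (∑ σ : Equiv.Perm (Fin N),
                  (if Hit N x μ lam K σ
                    then Real.exp (s * Sf N x μ (K + 1) σ / ((N : ℝ) - (K + 1 : ℕ))) else 0))
              + ∑ σ : Equiv.Perm (Fin N), (if (¬ Hit N x μ lam K σ
                  ∧ lam ≤ Sf N x μ (K + 1) σ / ((N : ℝ) - (K + 1 : ℕ)))
                  then Real.exp (s * Sf N x μ (K + 1) σ / ((N : ℝ) - (K + 1 : ℕ))) else 0) := by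
              apply add_le_add_left
              have hsub := sub_step N x μ hsum K (by omega) s
                (fun σ => if Hit N x μ lam K σ then (1:ℝ) else 0)
                (fun σ => by positivity)
                (fun σ σ' h => by
                  rw [if_congr (hit_prefix N x μ lam K σ σ' h) rfl rfl])
              simp only [ite_mul, one_mul, zero_mul] at hsub
              rw [hcast]
              exact hsub
          _ = ∑ σ : Equiv.Perm (Fin N), (if Hit N x μ lam (K + 1) σ
                then Real.exp (s * Sf N x μ (K + 1) σ / ((N : ℝ) - (K + 1 : ℕ))) else 0) := by
              rw [← Finset.sum_add_distrib]
              exact (Finset.sum_congr rfl fun σ _ =>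
                hsplit (fun σ => Real.exp (s * Sf N x μ (K + 1) σ / ((N : ℝ) - (K + 1 : ℕ)))) σ).symm
  calc ∑ σ : Equiv.Perm (Fin N), (if Hit N x μ lam m σ then Real.exp (s * lam) else 0)
      ≤ ∑ σ : Equiv.Perm (Fin N),
          (if Hit N x μ lam m σ then Real.exp (s * Sf N x μ m σ / ((N : ℝ) - m)) else 0) :=
        Inv m hm1 (le_refl m)
    _ ≤ ∑ σ : Equiv.Perm (Fin N), Real.exp (s * Sf N x μ m σ / ((N : ℝ) - m)) := by
        apply Finset.sum_le_sum
        intro σ _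
        by_cases h : Hit N x μ lam m σ
        · rw [if_pos h]
        · rw [if_neg h]
          exact (Real.exp_pos _).le

end Doob

lemma tele_sum (N : ℕ) : ∀ m : ℕ, m ≤ N - 1 →
    ∑ j ∈ Finset.Icc 1 m, (1 / ((N : ℝ) - j) - 1 / ((N : ℝ) - j + 1))
      = 1 / ((N : ℝ) - m) - 1 / N := by
  intro m
  induction m with
  | zero => simp
  | succ k ih =>
      intro hk
      rw [Finset.sum_Icc_succ_top (by omega : 1 ≤ k + 1), ih (by omega)]
      have h1 : ((N : ℝ) - (k + 1 : ℕ)) = (N : ℝ) - k - 1 := by push_cast; ring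
      rw [h1]
      have h2 : ((N : ℝ) - k - 1) + 1 = (N : ℝ) - k := by ring
      rw [h2]
      ring

lemma sum_sq_bound (N m : ℕ) (hm : 1 ≤ m) (hmN : m ≤ N - 1) (hN : 2 ≤ N) :
    ∑ j ∈ Finset.Icc 1 m, (1 / ((N : ℝ) - j)) ^ 2
      ≤ (m : ℝ) * ((N : ℝ) - m + 1) / ((N : ℝ) * ((N : ℝ) - m) ^ 2) := by
  have hNm : (1 : ℝ) ≤ (N : ℝ) - m := by
    have h1 : (m : ℝ) ≤ (N : ℝ) - 1 := by
      have : (m : ℕ) ≤ N - 1 := hmN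
      have h2 : ((N - 1 : ℕ) : ℝ) = (N : ℝ) - 1 := by
        push_cast [Nat.cast_sub (by omega : 1 ≤ N)]; ring
      calc (m : ℝ) ≤ ((N - 1 : ℕ) : ℝ) := by exact_mod_cast this
        _ = (N : ℝ) - 1 := h2
    linarith
  have hterm : ∀ j ∈ Finset.Icc 1 m, (1 / ((N : ℝ) - j)) ^ 2
      ≤ (((N : ℝ) - m + 1) / ((N : ℝ) - m)) * (1 / ((N : ℝ) - j) - 1 / ((N : ℝ) - j + 1)) := by
    intro j hj
    rw [Finset.mem_Icc] at hj
    have hjm : (j : ℝ) ≤ m := by exact_mod_cast hj.2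
    have hd : (1 : ℝ) ≤ (N : ℝ) - j := by linarith
    have hd0 : (0 : ℝ) < (N : ℝ) - j := by linarith
    have hd1 : (0 : ℝ) < (N : ℝ) - j + 1 := by linarith
    have hc0 : (0 : ℝ) < (N : ℝ) - m := by linarith
    have key : 1 / ((N : ℝ) - j) - 1 / ((N : ℝ) - j + 1)
        = 1 / (((N : ℝ) - j) * ((N : ℝ) - j + 1)) := by
      field_simp
      ring
    rw [key, div_pow, one_pow, div_mul_div_comm, mul_one, div_le_div_iff₀ (by positivity)
      (by positivity)]
    nlinarith [sq_nonneg ((N:ℝ) - j), hc0.le, hd0.le]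
  calc ∑ j ∈ Finset.Icc 1 m, (1 / ((N : ℝ) - j)) ^ 2
      ≤ ∑ j ∈ Finset.Icc 1 m, (((N : ℝ) - m + 1) / ((N : ℝ) - m))
          * (1 / ((N : ℝ) - j) - 1 / ((N : ℝ) - j + 1)) := Finset.sum_le_sum hterm
    _ = (((N : ℝ) - m + 1) / ((N : ℝ) - m)) * (1 / ((N : ℝ) - m) - 1 / N) := by
        rw [← Finset.mul_sum, tele_sum N m hmN]
    _ ≤ (m : ℝ) * ((N : ℝ) - m + 1) / ((N : ℝ) * ((N : ℝ) - m) ^ 2) := by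
        have hc0 : (0 : ℝ) < (N : ℝ) - m := by linarith
        have hN0 : (0 : ℝ) < (N : ℝ) := by positivity
        have h3 : 1 / ((N : ℝ) - m) - 1 / N = (m : ℝ) / (((N : ℝ) - m) * N) := by
          field_simp
          ring
        rw [h3]
        rw [div_mul_div_comm, div_le_div_iff₀ (by positivity) (by positivity)]
        ring_nf
        nlinarith [hc0, hN0]

lemma final_ineq (Nr mr ε c2 V lam : ℝ) (hN0 : 0 < Nr) (hm0 : 0 < mr)
    (hNm : 0 < Nr - mr) (hc2 : 0 < c2) (hV : 0 < V) (hε : 0 < ε)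
    (hlam : lam = mr * ε / (Nr - mr))
    (hVb : V ≤ mr * (Nr - mr + 1) / (Nr * (Nr - mr) ^ 2)) :
    -2 * lam ^ 2 / (c2 * V) ≤ -2 * mr * ε ^ 2 / ((1 - (mr - 1) / Nr) * c2) := by
  have hNm1 : (0 : ℝ) < Nr - mr + 1 := by linarith
  have hVb' : V * (Nr * (Nr - mr) ^ 2) ≤ mr * (Nr - mr + 1) :=
    (le_div_iff₀ (by positivity)).mp hVb
  have hlam2 : lam ^ 2 = mr ^ 2 * ε ^ 2 / (Nr - mr) ^ 2 := by
    rw [hlam, div_pow, mul_pow]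
  have hD2 : (0 : ℝ) < (Nr - mr + 1) * c2 := mul_pos hNm1 hc2
  have hD1 : (0 : ℝ) < c2 * V := mul_pos hc2 hV
  have hpos : 2 * mr * ε ^ 2 * Nr / ((Nr - mr + 1) * c2) ≤ 2 * lam ^ 2 / (c2 * V) := by
    rw [div_le_div_iff₀ hD2 hD1, hlam2]
    have hBeq : 2 * (mr ^ 2 * ε ^ 2 / (Nr - mr) ^ 2) * ((Nr - mr + 1) * c2)
        = (2 * mr ^ 2 * ε ^ 2 * ((Nr - mr + 1) * c2)) / (Nr - mr) ^ 2 := by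
      ring
    rw [hBeq, le_div_iff₀ (pow_pos hNm 2)]
    nlinarith [mul_le_mul_of_nonneg_left hVb'
      (show (0 : ℝ) ≤ 2 * ε ^ 2 * c2 * mr by positivity)]
  have hrw : (1 - (mr - 1) / Nr) * c2 = ((Nr - mr + 1) * c2) / Nr := by
    have h0 : (1 - (mr - 1) / Nr) = (Nr - mr + 1) / Nr := by
      field_simp
      ring
    rw [h0, div_mul_eq_mul_div]
  have e2 : -2 * mr * ε ^ 2 / ((1 - (mr - 1) / Nr) * c2)
      = -(2 * mr * ε ^ 2 * Nr / ((Nr - mr + 1) * c2)) := by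
    rw [hrw, div_div_eq_mul_div]
    ring
  rw [e2]
  calc -2 * lam ^ 2 / (c2 * V) = -(2 * lam ^ 2 / (c2 * V)) := by ring
    _ ≤ -(2 * mr * ε ^ 2 * Nr / ((Nr - mr + 1) * c2)) := neg_le_neg hpos

lemma exponent_eq (lam c2 V : ℝ) (hc2 : c2 ≠ 0) (hV : V ≠ 0) :
    (4 * lam / (c2 * V)) ^ 2 * c2 / 8 * V - (4 * lam / (c2 * V)) * lam
      = -2 * lam ^ 2 / (c2 * V) := by
  field_simp
  ring

/-- Hoeffding–Serfling maximal inequality: for a uniformly random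
without-replacement ordering `X₁, …, X_N` of `N` reals in `[a,b]` with mean
`μ`, and any `1 ≤ m ≤ N-1` and `ε > 0`,
`P(max_{1≤k≤m} (Σ_{t≤k} (X_t - μ))/(N-k) ≥ mε/(N-m))
  ≤ exp(-2mε² / ((1-(m-1)/N)(b-a)²))`. -/
theorem hoeffding_serfling_maximal_inequality
    (N m : ℕ) (hm : 1 ≤ m) (hmN : m ≤ N - 1) (a b : ℝ)
    (x : Fin N → ℝ) (hx : ∀ i, x i ∈ Set.Icc a b)
    (μ : ℝ) (hμ : μ = (∑ i, x i) / N)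
    (ε : ℝ) (hε : 0 < ε) :
    ((Finset.univ.filter (fun σ : Equiv.Perm (Fin N) =>
          ∃ k ∈ Finset.Icc 1 m,
            (m : ℝ) * ε / ((N : ℝ) - m)
              ≤ (∑ t : Fin N, if (t : ℕ) < k then x (σ t) - μ else 0)
                  / ((N : ℝ) - k))).card : ℝ)
        / (Fintype.card (Equiv.Perm (Fin N)) : ℝ)
      ≤ Real.exp (-2 * m * ε ^ 2 / ((1 - ((m : ℝ) - 1) / N) * (b - a) ^ 2)) := by
  have hN2 : 2 ≤ N := by omega
  have hmN' : m + 1 ≤ N := by omega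
  have hN0 : (0 : ℝ) < N := by exact_mod_cast (by omega : 0 < N)
  have hsum : ∑ i, x i = N * μ := by rw [hμ]; field_simp
  have hab : a ≤ b := le_trans (hx ⟨0, by omega⟩).1 (hx ⟨0, by omega⟩).2
  have hNm : (0 : ℝ) < (N : ℝ) - m := by
    have : ((m : ℝ) + 1) ≤ N := by exact_mod_cast hmN'
    linarith
  set lam := (m : ℝ) * ε / ((N : ℝ) - m) with hlamdef
  have hm0 : (0 : ℝ) < m := by exact_mod_cast hm
  have hlam : 0 < lam := div_pos (mul_pos hm0 hε) hNm
  have hcardP : (0 : ℝ) < (Fintype.card (Equiv.Perm (Fin N)) : ℝ) := by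
    exact_mod_cast Fintype.card_pos
  rcases eq_or_lt_of_le hab with hab1 | hab1
  · -- degenerate case a = b
    have hxall : ∀ i, x i = a := fun i => le_antisymm (hab1 ▸ (hx i).2) (hx i).1
    have hμa : μ = a := by
      rw [hμ, Finset.sum_congr rfl (fun i _ => hxall i), Finset.sum_const,
        Finset.card_univ, Fintype.card_fin, nsmul_eq_mul]
      field_simp
    have hempty : (Finset.univ.filter (fun σ : Equiv.Perm (Fin N) =>
        ∃ k ∈ Finset.Icc 1 m, lam
          ≤ (∑ t : Fin N, if (t : ℕ) < k then x (σ t) - μ else 0) / ((N : ℝ) - k))) = ∅ := by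
      rw [Finset.eq_empty_iff_forall_notMem]
      intro σ hσ
      simp only [Finset.mem_filter, Finset.mem_univ, true_and] at hσ
      obtain ⟨k, hk, hle⟩ := hσ
      have hzero : (∑ t : Fin N, if (t : ℕ) < k then x (σ t) - μ else 0) = 0 := by
        apply Finset.sum_eq_zero
        intro t _
        rw [hxall (σ t), hμa]
        simp
      rw [hzero, zero_div] at hle
      linarith
    rw [hempty]
    simp only [Finset.card_empty, Nat.cast_zero, zero_div]
    exact (Real.exp_pos _).le
  · -- main case a < b
    set V := ∑ j ∈ Finset.Icc 1 m, (1 / ((N : ℝ) - j)) ^ 2 with hVdef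
    have hV : 0 < V := by
      rw [hVdef]
      apply Finset.sum_pos
      · intro j hj
        rw [Finset.mem_Icc] at hj
        have hj1 : (j : ℝ) ≤ m := by exact_mod_cast hj.2
        have hj2 : (0 : ℝ) < (N : ℝ) - j := by linarith
        positivity
      · exact Finset.nonempty_Icc.mpr hm
    have hba2 : (0 : ℝ) < (b - a) ^ 2 := pow_pos (by linarith) 2
    set s := 4 * lam / ((b - a) ^ 2 * V) with hsdef
    have hs : 0 < s := div_pos (by linarith) (mul_pos hba2 hV)
    have hgoalrw : (Finset.univ.filter (fun σ : Equiv.Perm (Fin N) =>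
        ∃ k ∈ Finset.Icc 1 m, lam
          ≤ (∑ t : Fin N, if (t : ℕ) < k then x (σ t) - μ else 0) / ((N : ℝ) - k)))
        = Finset.univ.filter (fun σ : Equiv.Perm (Fin N) => Hit N x μ lam m σ) := by
      ext σ
      simp only [Finset.mem_filter, Finset.mem_univ, true_and]
      exact Iff.rfl
    rw [hgoalrw]
    set F := Finset.univ.filter (fun σ : Equiv.Perm (Fin N) => Hit N x μ lam m σ) with hF
    have hcardF : (F.card : ℝ)
        = ∑ σ : Equiv.Perm (Fin N), (if Hit N x μ lam m σ then (1 : ℝ) else 0) := by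
      rw [Finset.sum_boole, hF]
    have hdoob := doob N x μ lam s hsum hs.le m hm hmN'
    have h5 : ∑ σ : Equiv.Perm (Fin N), (if Hit N x μ lam m σ then Real.exp (s * lam) else 0)
        = Real.exp (s * lam) * (F.card : ℝ) := by
      rw [hcardF, Finset.mul_sum]
      apply Finset.sum_congr rfl
      intro σ _
      split_ifs <;> simp
    have htel := mgf_telescope N x μ a b hab1 hx hsum s hs m (by omega)
    rw [← hVdef] at htel
    have key : Real.exp (s * lam) * (F.card : ℝ)
        ≤ (Fintype.card (Equiv.Perm (Fin N)) : ℝ) * Real.exp (s ^ 2 * (b - a) ^ 2 / 8 * V) := by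
      rw [← h5]
      exact le_trans hdoob htel
    have hexp : (0 : ℝ) < Real.exp (s * lam) := Real.exp_pos _
    have h6 : (F.card : ℝ) / (Fintype.card (Equiv.Perm (Fin N)) : ℝ)
        ≤ Real.exp (s ^ 2 * (b - a) ^ 2 / 8 * V - s * lam) := by
      rw [div_le_iff₀ hcardP, Real.exp_sub, div_mul_eq_mul_div, le_div_iff₀ hexp]
      calc (F.card : ℝ) * Real.exp (s * lam) = Real.exp (s * lam) * (F.card : ℝ) := by ring
        _ ≤ (Fintype.card (Equiv.Perm (Fin N)) : ℝ) * Real.exp (s ^ 2 * (b - a) ^ 2 / 8 * V) :=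
            key
        _ = Real.exp (s ^ 2 * (b - a) ^ 2 / 8 * V)
              * (Fintype.card (Equiv.Perm (Fin N)) : ℝ) := by ring
    have h8 : s ^ 2 * (b - a) ^ 2 / 8 * V - s * lam = -2 * lam ^ 2 / ((b - a) ^ 2 * V) := by
      rw [hsdef]
      exact exponent_eq lam ((b - a) ^ 2) V hba2.ne' hV.ne' 
    have hVb := sum_sq_bound N m hm hmN hN2
    rw [← hVdef] at hVb
    have h9 : -2 * lam ^ 2 / ((b - a) ^ 2 * V)
        ≤ -2 * m * ε ^ 2 / ((1 - ((m : ℝ) - 1) / N) * (b - a) ^ 2) :=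
      final_ineq (N : ℝ) (m : ℝ) ε ((b - a) ^ 2) V lam hN0 hm0 hNm hba2 hV hε hlamdef hVb
    calc (F.card : ℝ) / (Fintype.card (Equiv.Perm (Fin N)) : ℝ)
        ≤ Real.exp (s ^ 2 * (b - a) ^ 2 / 8 * V - s * lam) := h6
      _ = Real.exp (-2 * lam ^ 2 / ((b - a) ^ 2 * V)) := by rw [h8]
      _ ≤ Real.exp (-2 * m * ε ^ 2 / ((1 - ((m : ℝ) - 1) / N) * (b - a) ^ 2)) :=
          Real.exp_le_exp.mpr h9
end
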